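/- arXiv:1612.09000 — 8 statements merged into one kernel-verified Lean document; each statement's English description precedes it below -/
import Mathlib

section
/- If G is a compact group with normalized Haar measure μ, h : G → ℂ is a continuous positive definite function with α = ∫ h dμ, and α₀ ≤ α is a real number, then the function h − α₀ is also positive definite; equivalently, for all u₁,...,u_m ∈ G and c₁,...,c_m ∈ ℂ, ∑_{i,j} h(u_i⁻¹ u_j) conj(c_i) c_j ≥ α₀ |∑_i c_i|². -/
open MeasureTheory
open scoped ComplexOrder

/-- Positive definiteness of a complex-valued function on a group. -/
def IsPosDef {G : Type*} [Group G] (h : G → ℂ) : Prop :=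
  ∀ (m : ℕ) (u : Fin m → G) (c : Fin m → ℂ),
    0 ≤ ∑ i, ∑ j, (starRingEnd ℂ) (c i) * c j * h ((u i)⁻¹ * u j)

lemma aux_herm {G : Type*} [Group G] {h : G → ℂ} (hpd : IsPosDef h) (g : G) :
    h g⁻¹ = (starRingEnd ℂ) (h g) := by
  have h1 := hpd 1 ![1] ![1]
  have h2 := hpd 2 ![1, g] ![1, 1]
  have h3 := hpd 2 ![1, g] ![1, Complex.I]
  simp [Fin.sum_univ_two, Fin.sum_univ_one, Complex.le_def, Complex.ext_iff] at h1 h2 h3 ⊢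
  constructor <;> linarith

lemma aux_pointwise {G : Type*} [Group G] {h : G → ℂ} (hpd : IsPosDef h)
    (m : ℕ) (u : Fin m → G) (c : Fin m → ℂ) (x : G) :
    0 ≤ (∑ i, ∑ j, (starRingEnd ℂ) (c i) * c j * h ((u i)⁻¹ * u j)) * 2
      - (∑ i, ∑ j, (starRingEnd ℂ) (c i) * c j * h ((u i)⁻¹ * x * u j))
      - (∑ i, ∑ j, (starRingEnd ℂ) (c i) * c j * h ((u i)⁻¹ * x⁻¹ * u j)) := by
  have key := hpd (m + m) (Fin.append u fun i => x * u i) (Fin.append c fun i => -c i)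
  simp only [Fin.sum_univ_add, Fin.append_left, Fin.append_right, map_neg, neg_mul, mul_neg,
    neg_neg, mul_inv_rev, Finset.sum_neg_distrib, Finset.sum_add_distrib] at key
  have e1 : ∀ i j : Fin m, (u i)⁻¹ * x⁻¹ * (x * u j) = (u i)⁻¹ * u j := by
    intro i j; group
  have e2 : ∀ i j : Fin m, (u i)⁻¹ * (x * u j) = (u i)⁻¹ * x * u j := by
    intro i j; group
  simp only [e1, e2] at key
  convert key using 1
  ring

/-- If `G` is a compact group with normalized Haar measure `μ`, `h : G → ℂ` is a
continuous positive definite function with `α = ∫ h dμ`, and `α₀ ≤ α` is a real number,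
then `h − α₀` is also positive definite; equivalently, for all `u₁,…,u_m ∈ G` and
`c₁,…,c_m ∈ ℂ`, `∑_{i,j} h(u_i⁻¹ u_j) conj(c_i) c_j ≥ α₀ |∑_i c_i|²`. -/
theorem posDef_sub_const {G : Type*} [Group G] [TopologicalSpace G]
    [IsTopologicalGroup G] [CompactSpace G] [MeasurableSpace G] [BorelSpace G]
    (μ : Measure G) [μ.IsHaarMeasure] [IsProbabilityMeasure μ]
    (h : G → ℂ) (hcont : Continuous h) (hpd : IsPosDef h)
    (α₀ : ℝ) (hα₀ : (α₀ : ℂ) ≤ ∫ x, h x ∂μ) :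
    IsPosDef (fun x => h x - α₀) ∧
      ∀ (m : ℕ) (u : Fin m → G) (c : Fin m → ℂ),
        (α₀ * ‖∑ i, c i‖ ^ 2 : ℂ) ≤
          ∑ i, ∑ j, (starRingEnd ℂ) (c i) * c j * h ((u i)⁻¹ * u j) := by
  set α := ∫ x, h x ∂μ with hα
  -- the Haar measure is right invariant
  have hRight : μ.IsMulRightInvariant := by
    constructor
    intro g
    have h1 : IsProbabilityMeasure (Measure.map (· * g) μ) :=
      Measure.isProbabilityMeasure_map (measurable_mul_const g).aemeasurable
    exact Measure.isHaarMeasure_eq_of_isProbabilityMeasure _ μ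
  have hInt : ∀ f : G → ℂ, Continuous f → Integrable f μ := fun f hf =>
    hf.integrable_of_hasCompactSupport
      (IsCompact.of_isClosed_subset isCompact_univ (isClosed_tsupport f) (Set.subset_univ _))
  have hmc : ∀ (a : ℂ) (g k : G), Continuous fun x => a * h (g * x * k) := by
    intro a g k
    exact continuous_const.mul (hcont.comp (by fun_prop))
  have hcc : ∀ (a : ℂ) (g k : G),
      Continuous fun x => a * (starRingEnd ℂ) (h (g * x * k)) := by
    intro a g k
    exact continuous_const.mul (continuous_star.comp (hcont.comp (by fun_prop)))
  have hTrans : ∀ g k : G, ∫ x, h (g * x * k) ∂μ = α := by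
    intro g k
    calc ∫ x, h (g * x * k) ∂μ = ∫ x, (fun y => h (y * k)) x ∂μ := by
          simpa using MeasureTheory.integral_mul_left_eq_self (fun y => h (y * k)) g
      _ = α := MeasureTheory.integral_mul_right_eq_self h k
  have him : α.im = 0 := by
    have := (Complex.le_def.mp hα₀).2
    simpa using this.symm
  have hconjα : (starRingEnd ℂ) α = α := Complex.conj_eq_iff_im.mpr him
  -- the key inequality
  have key : ∀ (m : ℕ) (u : Fin m → G) (c : Fin m → ℂ),
      α * ((starRingEnd ℂ) (∑ i, c i) * ∑ i, c i) ≤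
        ∑ i, ∑ j, (starRingEnd ℂ) (c i) * c j * h ((u i)⁻¹ * u j) := by
    intro m u c
    set A := ∑ i, ∑ j, (starRingEnd ℂ) (c i) * c j * h ((u i)⁻¹ * u j) with hA
    set s := ∑ i, c i with hs
    set φ : G → ℂ := fun x => ∑ i, ∑ j, (starRingEnd ℂ) (c i) * c j * h ((u i)⁻¹ * x * u j)
      with hφ
    have hφcont : Continuous φ := by
      apply continuous_finset_sum
      intro i _
      apply continuous_finset_sum
      intro j _
      exact continuous_const.mul
        (hcont.comp ((continuous_const.mul continuous_id).mul continuous_const))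
    have hφicont : Continuous fun x => φ x⁻¹ := hφcont.comp continuous_inv
    -- integral of φ
    have hIφ : ∫ x, φ x ∂μ = (starRingEnd ℂ) s * s * α := by
      rw [hφ]
      rw [integral_finset_sum _ (fun i _ => integrable_finset_sum _
        (fun j _ => hInt _ (hmc _ _ _)))]
      have : ∀ i, ∫ x, ∑ j, (starRingEnd ℂ) (c i) * c j * h ((u i)⁻¹ * x * u j) ∂μ
          = ∑ j, (starRingEnd ℂ) (c i) * c j * α := by
        intro i
        rw [integral_finset_sum _ (fun j _ => hInt _ (hmc _ _ _))]
        refine Finset.sum_congr rfl fun j _ => ?_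
        rw [integral_const_mul, hTrans]
      simp_rw [this]
      simp_rw [mul_assoc, ← Finset.mul_sum, ← Finset.sum_mul]
      rw [← map_sum, ← hs]
      try ring
    -- integral of φ ∘ inv
    have hIφi : ∫ x, φ x⁻¹ ∂μ = (starRingEnd ℂ) s * s * α := by
      have hrw : ∀ x, φ x⁻¹ = ∑ i, ∑ j, (starRingEnd ℂ) (c i) * c j *
          (starRingEnd ℂ) (h ((u j)⁻¹ * x * u i)) := by
        intro x
        rw [hφ]
        refine Finset.sum_congr rfl fun i _ => Finset.sum_congr rfl fun j _ => ?_
        have : (u i)⁻¹ * x⁻¹ * u j = ((u j)⁻¹ * x * u i)⁻¹ := by group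
        rw [this, aux_herm hpd]
      simp_rw [hrw]
      rw [integral_finset_sum _ (fun i _ => integrable_finset_sum _
        (fun j _ => hInt _ (hcc _ _ _)))]
      have : ∀ i, ∫ x, ∑ j, (starRingEnd ℂ) (c i) * c j *
          (starRingEnd ℂ) (h ((u j)⁻¹ * x * u i)) ∂μ
          = ∑ j, (starRingEnd ℂ) (c i) * c j * α := by
        intro i
        rw [integral_finset_sum _ (fun j _ => hInt _ (hcc _ _ _))]
        refine Finset.sum_congr rfl fun j _ => ?_
        rw [integral_const_mul, integral_conj, hTrans, hconjα]
      simp_rw [this]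
      simp_rw [mul_assoc, ← Finset.mul_sum, ← Finset.sum_mul]
      rw [← map_sum, ← hs]
      try ring
    -- integrate the pointwise inequality
    have hψpt : ∀ x, 0 ≤ A * 2 - φ x - φ x⁻¹ := fun x => aux_pointwise hpd m u c x
    have hψnn : 0 ≤ ∫ x, (A * 2 - φ x - φ x⁻¹) ∂μ := by
      have hre : ∀ x, A * 2 - φ x - φ x⁻¹ = (((A * 2 - φ x - φ x⁻¹).re : ℝ) : ℂ) := by
        intro x
        have := Complex.le_def.mp (hψpt x)
        exact Complex.ext rfl (by simpa using this.2.symm)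
      calc (0 : ℂ) = ((0 : ℝ) : ℂ) := by norm_num
        _ ≤ ((∫ x, (A * 2 - φ x - φ x⁻¹).re ∂μ : ℝ) : ℂ) := by
            rw [Complex.real_le_real]
            exact integral_nonneg fun x => (Complex.le_def.mp (hψpt x)).1
        _ = ∫ x, (((A * 2 - φ x - φ x⁻¹).re : ℝ) : ℂ) ∂μ := (integral_ofReal).symm
        _ = ∫ x, (A * 2 - φ x - φ x⁻¹) ∂μ := by
            refine integral_congr_ae (Filter.Eventually.of_forall fun x => ?_)
            exact (hre x).symm
    have hIψ : ∫ x, (A * 2 - φ x - φ x⁻¹) ∂μ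
        = A * 2 - (starRingEnd ℂ) s * s * α - (starRingEnd ℂ) s * s * α := by
      rw [integral_sub (show Integrable (fun x => A * 2 - φ x) μ from
          (integrable_const _).sub (hInt _ hφcont)) (hInt _ hφicont),
        integral_sub (integrable_const _) (hInt _ hφcont), integral_const, hIφ, hIφi]
      simp [measure_univ]
    rw [hIψ] at hψnn
    have h2 : 0 ≤ (A - α * ((starRingEnd ℂ) s * s)) * 2 := by
      convert hψnn using 1; ring
    have h3 : 0 ≤ A - α * ((starRingEnd ℂ) s * s) := by
      have h4 := mul_nonneg h2 (by simp [Complex.le_def] : (0:ℂ) ≤ (2:ℂ)⁻¹)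
      calc (0:ℂ) ≤ (A - α * ((starRingEnd ℂ) s * s)) * 2 * 2⁻¹ := h4
        _ = A - α * ((starRingEnd ℂ) s * s) := by ring
    exact sub_nonneg.mp h3
  have halg : ∀ (m : ℕ) (c : Fin m → ℂ) (t : ℂ),
      ∑ i, ∑ j, (starRingEnd ℂ) (c i) * c j * t
        = t * ((starRingEnd ℂ) (∑ i, c i) * ∑ i, c i) := by
    intro m c t
    simp_rw [mul_assoc, ← Finset.mul_sum, ← Finset.sum_mul, ← map_sum]
    ring
  have hnn : ∀ (m : ℕ) (c : Fin m → ℂ),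
      ((‖∑ i, c i‖ : ℝ) : ℂ) ^ 2 = (starRingEnd ℂ) (∑ i, c i) * ∑ i, c i ∧
        0 ≤ (starRingEnd ℂ) (∑ i, c i) * ∑ i, c i := by
    intro m c
    have h1 : ((‖∑ i, c i‖ : ℝ) : ℂ) ^ 2
        = (starRingEnd ℂ) (∑ i, c i) * ∑ i, c i := by
      rw [← Complex.ofReal_pow, Complex.sq_norm, Complex.normSq_eq_conj_mul_self]
    refine ⟨h1, ?_⟩
    rw [← h1, ← Complex.ofReal_pow]
    exact Complex.zero_le_real.mpr (sq_nonneg _)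
  have main : ∀ (m : ℕ) (u : Fin m → G) (c : Fin m → ℂ),
      (α₀ : ℂ) * ((starRingEnd ℂ) (∑ i, c i) * ∑ i, c i) ≤
        ∑ i, ∑ j, (starRingEnd ℂ) (c i) * c j * h ((u i)⁻¹ * u j) := by
    intro m u c
    calc (α₀ : ℂ) * ((starRingEnd ℂ) (∑ i, c i) * ∑ i, c i)
        ≤ α * ((starRingEnd ℂ) (∑ i, c i) * ∑ i, c i) :=
          mul_le_mul_of_nonneg_right hα₀ (hnn m c).2
      _ ≤ _ := key m u c
  constructor
  · intro m u c
    have e : ∑ i, ∑ j, (starRingEnd ℂ) (c i) * c j * ((fun x => h x - (α₀ : ℂ)) ((u i)⁻¹ * u j))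
        = (∑ i, ∑ j, (starRingEnd ℂ) (c i) * c j * h ((u i)⁻¹ * u j))
          - (α₀ : ℂ) * ((starRingEnd ℂ) (∑ i, c i) * ∑ i, c i) := by
      simp_rw [mul_sub, Finset.sum_sub_distrib]
      rw [halg]
    rw [e]
    exact sub_nonneg.mpr (main m u c)
  · intro m u c
    calc ((α₀ : ℂ) * (‖∑ i, c i‖ : ℝ) ^ 2)
        = (α₀ : ℂ) * ((starRingEnd ℂ) (∑ i, c i) * ∑ i, c i) := by rw [← (hnn m c).1]
      _ ≤ _ := main m u c
end

section
/- Let G be a compact group with normalized Haar measure μ and let A ⊆ G be a symmetric subset (A = A⁻¹) containing the identity. Suppose h : G → ℝ is a continuous positive definite function with h(x) ≤ 0 for all x ∉ A and ∫ h dμ > 0. Then any finite set B ⊆ G with b⁻¹ b' ∈ Aᶜ ∪ {1} for all b, b' ∈ B satisfies |B| ≤ h(1) / ∫ h dμ. -/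
open MeasureTheory
open scoped ComplexOrder

/-- Positive definiteness of a real-valued function on a group. -/
def IsPosDefReal {G : Type*} [Group G] (h : G → ℝ) : Prop :=
  ∀ (m : ℕ) (u : Fin m → G) (c : Fin m → ℂ),
    0 ≤ ∑ i, ∑ j, (starRingEnd ℂ) (c i) * c j * (h ((u i)⁻¹ * u j) : ℂ)

lemma pd_real {G : Type*} [Group G] {h : G → ℝ} (hpd : IsPosDefReal h)
    {ι : Type*} [Fintype ι] (u : ι → G) (c : ι → ℝ) :
    0 ≤ ∑ i, ∑ j, c i * c j * h ((u i)⁻¹ * u j) := by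
  classical
  set e := Fintype.equivFin ι with he
  have h1 := hpd (Fintype.card ι) (u ∘ e.symm) (fun i => (c (e.symm i) : ℂ))
  have h2 : (∑ i, ∑ j, (starRingEnd ℂ) ((c (e.symm i) : ℂ)) * (c (e.symm j) : ℂ)
        * (h (((u ∘ e.symm) i)⁻¹ * (u ∘ e.symm) j) : ℂ))
      = ((∑ i : ι, ∑ j : ι, c i * c j * h ((u i)⁻¹ * u j) : ℝ) : ℂ) := by
    rw [← Equiv.sum_comp e.symm (fun i : ι => ∑ j : ι, c i * c j * h ((u i)⁻¹ * u j))]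
    push_cast [Complex.conj_ofReal]
    refine Finset.sum_congr rfl fun i _ => ?_
    rw [← Equiv.sum_comp e.symm (fun j : ι => (c (e.symm i) : ℂ) * (c j : ℂ) * (h ((u (e.symm i))⁻¹ * u j) : ℂ))]
    simp [Function.comp]
  rw [h2] at h1
  exact_mod_cast h1

lemma pd_symm {G : Type*} [Group G] {h : G → ℝ} (hpd : IsPosDefReal h) (x : G) :
    h x⁻¹ = h x := by
  have h0 := hpd 2 ![1, x] ![1, Complex.I]
  rw [Complex.le_def] at h0
  obtain ⟨-, him⟩ := h0
  simp [Fin.sum_univ_two, Complex.ext_iff, Complex.add_im, Complex.mul_im] at him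
  linarith

/-- Non-commutative Delsarte scheme for compact groups: let `G` be a compact group
with normalized Haar measure `μ` and `A ⊆ G` a symmetric set containing `1`.
If `h : G → ℝ` is continuous, positive definite, `h ≤ 0` off `A`, and `∫ h dμ > 0`,
then any finite `B ⊆ G` with all quotients `b⁻¹ b'` in `Aᶜ ∪ {1}` satisfies
`|B| ≤ h(1) / ∫ h dμ`. -/
theorem noncomm_delsarte {G : Type*} [Group G] [TopologicalSpace G]
    [IsTopologicalGroup G] [CompactSpace G] [MeasurableSpace G] [BorelSpace G]
    (μ : Measure G) [μ.IsHaarMeasure] [IsProbabilityMeasure μ]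
    (A : Set G) (hAsymm : A = A⁻¹) (hA1 : (1 : G) ∈ A)
    (h : G → ℝ) (hcont : Continuous h) (hpd : IsPosDefReal h)
    (hneg : ∀ x ∉ A, h x ≤ 0) (hint : 0 < ∫ x, h x ∂μ)
    (B : Finset G) (hB : ∀ b ∈ B, ∀ b' ∈ B, b⁻¹ * b' ∈ Aᶜ ∪ {1}) :
    (B.card : ℝ) ≤ h 1 / ∫ x, h x ∂μ := by
  classical
  set I : ℝ := ∫ x, h x ∂μ with hIdef
  set n : ℕ := B.card with hndef
  set S : ℝ := ∑ b ∈ B, ∑ b' ∈ B, h (b⁻¹ * b') with hSdef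
  have hh1 : 0 ≤ h 1 := by
    have := pd_real hpd (fun _ : Fin 1 => (1 : G)) (fun _ => (1 : ℝ))
    simpa using this
  have hIntc : ∀ f : G → ℝ, Continuous f → Integrable f μ := fun f hf =>
    hf.integrable_of_hasCompactSupport (HasCompactSupport.of_compactSpace f)
  have hIg : ∀ g : G, ∫ y, h (g * y) ∂μ = I := fun g =>
    integral_mul_left_eq_self h g
  have hIg' : ∀ g : G, ∫ y, h (y⁻¹ * g) ∂μ = I := by
    intro g
    have : (fun y : G => h (y⁻¹ * g)) = fun y => h (g⁻¹ * y) := by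
      funext y
      rw [← pd_symm hpd (y⁻¹ * g)]
      simp [mul_inv_rev]
    rw [this]; exact hIg g⁻¹
  have hcont1 : ∀ g : G, Continuous fun y : G => h (g * y) := fun g =>
    hcont.comp (continuous_mul_left g)
  have hcont2 : ∀ g : G, Continuous fun y : G => h (y⁻¹ * g) := fun g =>
    hcont.comp (continuous_inv.mul continuous_const)
  -- upper bound : S ≤ n * h 1
  have hSub : S ≤ (n : ℝ) * h 1 := by
    rw [hSdef]
    calc ∑ b ∈ B, ∑ b' ∈ B, h (b⁻¹ * b') ≤ ∑ _b ∈ B, h 1 := by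
          refine Finset.sum_le_sum fun b hb => ?_
          rw [← Finset.add_sum_erase _ _ hb, inv_mul_cancel]
          have : ∑ b' ∈ B.erase b, h (b⁻¹ * b') ≤ 0 := by
            refine Finset.sum_nonpos fun b' hb' => ?_
            have hbne : b' ≠ b := Finset.ne_of_mem_erase hb'
            have hmem := hB b hb b' (Finset.mem_of_mem_erase hb')
            rcases hmem with hm | hm
            · exact hneg _ hm
            · exfalso; apply hbne
              have hm' : b⁻¹ * b' = 1 := hm
              rwa [inv_mul_eq_one, eq_comm] at hm'
          linarith
        _ = (n : ℝ) * h 1 := by rw [Finset.sum_const, hndef, nsmul_eq_mul]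
  -- lower bound via k-point amplification
  have hlow : ∀ k : ℕ, 0 < k →
      (n : ℝ) ^ 2 * I - (n : ℝ) ^ 2 * (h 1 - I) / k ≤ S := by
    intro k hk
    have hkne : ((k : ℝ)) ≠ 0 := Nat.cast_ne_zero.mpr hk.ne'
    set t : ℝ := (n : ℝ) / k with htdef
    have claim : ∀ i : ℕ, i ≤ k → ∀ x : ℕ → G,
        0 ≤ S - t * (2 * ((k : ℝ) - (k - i : ℕ)) * n * I
              + ∑ b ∈ B, ∑ l ∈ Finset.range (k - i), (h (b⁻¹ * x l) + h ((x l)⁻¹ * b)))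
          + t ^ 2 * (((k : ℝ) - (k - i : ℕ)) * h 1
              + (((k : ℝ) - (k - i : ℕ)) * (((k : ℝ) - (k - i : ℕ)) - 1)
                 + 2 * (k - i : ℕ) * ((k : ℝ) - (k - i : ℕ))) * I
              + ∑ l ∈ Finset.range (k - i), ∑ l' ∈ Finset.range (k - i),
                  h ((x l)⁻¹ * x l')) := by
      intro i
      induction i with
      | zero =>
        intro _ x
        simp only [Nat.sub_zero, sub_self]
        have key := pd_real hpd (ι := {b // b ∈ B} ⊕ Fin k)
          (Sum.elim (fun b => (b : G)) (fun l => x l.val))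
          (Sum.elim (fun _ => (1 : ℝ)) (fun _ => -t))
        simp only [Fintype.sum_sum_type, Sum.elim_inl, Sum.elim_inr, one_mul, mul_one,
          neg_mul, mul_neg, neg_neg] at key
        have c1 : (∑ a : {b // b ∈ B}, (∑ a' : {b // b ∈ B}, h ((a:G)⁻¹ * (a':G))
              + ∑ l : Fin k, -(t * h ((a:G)⁻¹ * x l.val))))
            = ∑ b ∈ B, (∑ b' ∈ B, h (b⁻¹ * b') + -(t * ∑ l ∈ Finset.range k, h (b⁻¹ * x l))) :=
          calc _ = ∑ a : {b // b ∈ B}, (∑ b' ∈ B, h ((a:G)⁻¹ * b')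
                + -(t * ∑ l ∈ Finset.range k, h ((a:G)⁻¹ * x l))) := by
                refine Finset.sum_congr rfl fun a _ => ?_
                rw [Finset.sum_coe_sort B (fun b' => h ((a:G)⁻¹ * b')),
                  Fin.sum_univ_eq_sum_range (fun l => -(t * h ((a:G)⁻¹ * x l))) k,
                  Finset.sum_neg_distrib, ← Finset.mul_sum]
            _ = _ := Finset.sum_coe_sort B
                  (fun b => ∑ b' ∈ B, h (b⁻¹ * b') + -(t * ∑ l ∈ Finset.range k, h (b⁻¹ * x l)))
        have c2 : (∑ l : Fin k, (∑ a : {b // b ∈ B}, -(t * h ((x l.val)⁻¹ * (a:G)))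
              + ∑ l' : Fin k, t * t * h ((x l.val)⁻¹ * x l'.val)))
            = ∑ l ∈ Finset.range k, (-(t * ∑ b ∈ B, h ((x l)⁻¹ * b))
              + t * t * ∑ l' ∈ Finset.range k, h ((x l)⁻¹ * x l')) :=
          calc _ = ∑ l : Fin k, (-(t * ∑ b ∈ B, h ((x l.val)⁻¹ * b))
                + t * t * ∑ l' ∈ Finset.range k, h ((x l.val)⁻¹ * x l')) := by
                refine Finset.sum_congr rfl fun l _ => ?_
                rw [Finset.sum_coe_sort B (fun b => -(t * h ((x l.val)⁻¹ * b))),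
                  Finset.sum_neg_distrib, ← Finset.mul_sum,
                  Fin.sum_univ_eq_sum_range (fun l' => t * t * h ((x l.val)⁻¹ * x l')) k,
                  ← Finset.mul_sum]
            _ = _ := Fin.sum_univ_eq_sum_range
                  (fun l => -(t * ∑ b ∈ B, h ((x l)⁻¹ * b))
                    + t * t * ∑ l' ∈ Finset.range k, h ((x l)⁻¹ * x l')) k
        rw [c1, c2] at key
        refine le_of_le_of_eq key ?_
        rw [hSdef]
        simp only [Finset.sum_add_distrib, Finset.sum_neg_distrib, ← Finset.mul_sum]
        rw [Finset.sum_comm (s := B) (t := Finset.range k)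
          (f := fun b l => h ((x l)⁻¹ * b))]
        ring
      | succ i ih =>
        intro hik x
        have hik' : i ≤ k := Nat.le_of_succ_le hik
        set j : ℕ := k - (i + 1) with hjdef
        have hj1 : k - i = j + 1 := by omega
        -- pointwise inequality in y
        have key : ∀ y : G,
            0 ≤ (S - t * (2 * ((k : ℝ) - ((j:ℕ)+1:ℕ)) * n * I
                  + ∑ b ∈ B, ∑ l ∈ Finset.range j, (h (b⁻¹ * x l) + h ((x l)⁻¹ * b)))
              + t ^ 2 * (((k : ℝ) - ((j:ℕ)+1:ℕ)) * h 1
                  + (((k : ℝ) - ((j:ℕ)+1:ℕ)) * (((k : ℝ) - ((j:ℕ)+1:ℕ)) - 1)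
                     + 2 * ((j:ℕ)+1:ℕ) * ((k : ℝ) - ((j:ℕ)+1:ℕ))) * I
                  + ∑ l ∈ Finset.range j, ∑ l' ∈ Finset.range j, h ((x l)⁻¹ * x l')))
              + (-t * (∑ b ∈ B, (h (b⁻¹ * y) + h (y⁻¹ * b)))
                 + t ^ 2 * ((∑ l ∈ Finset.range j, (h ((x l)⁻¹ * y) + h (y⁻¹ * x l))) + h 1)) := by
          intro y
          have H := ih hik' (Function.update x j y)
          rw [hj1] at H
          set x' := Function.update x j y with hx'
          have hx'j : x' j = y := Function.update_self j y x
          have hx'l : ∀ l, l ∈ Finset.range j → x' l = x l := fun l hl =>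
            Function.update_of_ne (Nat.ne_of_lt (Finset.mem_range.mp hl)) y x
          have s1 : ∑ b ∈ B, ∑ l ∈ Finset.range (j+1), (h (b⁻¹ * x' l) + h ((x' l)⁻¹ * b))
              = (∑ b ∈ B, ∑ l ∈ Finset.range j, (h (b⁻¹ * x l) + h ((x l)⁻¹ * b)))
                + ∑ b ∈ B, (h (b⁻¹ * y) + h (y⁻¹ * b)) := by
            rw [← Finset.sum_add_distrib]
            refine Finset.sum_congr rfl fun b _ => ?_
            rw [Finset.sum_range_succ, hx'j]
            congr 1
            exact Finset.sum_congr rfl fun l hl => by rw [hx'l l hl]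
          have s2 : ∑ l ∈ Finset.range (j+1), ∑ l' ∈ Finset.range (j+1), h ((x' l)⁻¹ * x' l')
              = (∑ l ∈ Finset.range j, ∑ l' ∈ Finset.range j, h ((x l)⁻¹ * x l'))
                + ((∑ l ∈ Finset.range j, (h ((x l)⁻¹ * y) + h (y⁻¹ * x l))) + h 1) := by
            rw [Finset.sum_range_succ]
            simp only [Finset.sum_range_succ, hx'j, inv_mul_cancel]
            rw [Finset.sum_add_distrib]
            have e1 : ∑ l ∈ Finset.range j, ∑ l' ∈ Finset.range j, h ((x' l)⁻¹ * x' l')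
                = ∑ l ∈ Finset.range j, ∑ l' ∈ Finset.range j, h ((x l)⁻¹ * x l') :=
              Finset.sum_congr rfl fun l hl => Finset.sum_congr rfl fun l' hl' => by
                rw [hx'l l hl, hx'l l' hl']
            have e2 : ∑ l ∈ Finset.range j, h ((x' l)⁻¹ * y)
                = ∑ l ∈ Finset.range j, h ((x l)⁻¹ * y) :=
              Finset.sum_congr rfl fun l hl => by rw [hx'l l hl]
            have e3 : ∑ l' ∈ Finset.range j, h (y⁻¹ * x' l')
                = ∑ l' ∈ Finset.range j, h (y⁻¹ * x l') :=
              Finset.sum_congr rfl fun l hl => by rw [hx'l l hl]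
            rw [e1, e2, e3, Finset.sum_add_distrib]
            ring
          rw [s1, s2] at H
          refine le_of_le_of_eq H ?_
          push_cast
          ring
        -- integrate the pointwise inequality
        have hccont : Continuous fun y : G =>
            (∑ b ∈ B, (h (b⁻¹ * y) + h (y⁻¹ * b))) := by
          exact continuous_finset_sum _ fun b _ => (hcont1 b⁻¹).add (hcont2 b)
        have hccont2 : Continuous fun y : G =>
            (∑ l ∈ Finset.range j, (h ((x l)⁻¹ * y) + h (y⁻¹ * x l))) := by
          exact continuous_finset_sum _ fun l _ => (hcont1 (x l)⁻¹).add (hcont2 (x l))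
        have hcontPhi : Continuous (fun y : G =>
            -t * (∑ b ∈ B, (h (b⁻¹ * y) + h (y⁻¹ * b)))
            + t ^ 2 * ((∑ l ∈ Finset.range j, (h ((x l)⁻¹ * y) + h (y⁻¹ * x l))) + h 1)) :=
          (continuous_const.mul hccont).add
            (continuous_const.mul (hccont2.add continuous_const))
        have eb : ∀ b ∈ B, (∫ y, (h (b⁻¹ * y) + h (y⁻¹ * b)) ∂μ) = 2 * I := fun b _ => by
          rw [integral_add (hIntc _ (hcont1 b⁻¹)) (hIntc _ (hcont2 b)), hIg, hIg']; ring
        have el : ∀ l ∈ Finset.range j,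
            (∫ y, (h ((x l)⁻¹ * y) + h (y⁻¹ * x l)) ∂μ) = 2 * I := fun l _ => by
          rw [integral_add (hIntc _ (hcont1 (x l)⁻¹)) (hIntc _ (hcont2 (x l))), hIg, hIg']; ring
        have i1 : (∫ y, (∑ b ∈ B, (h (b⁻¹ * y) + h (y⁻¹ * b))) ∂μ) = 2 * (n:ℝ) * I := by
          rw [integral_finset_sum _ (fun b _ => (hIntc _ ((hcont1 b⁻¹).add (hcont2 b)) :
              Integrable (fun y => h (b⁻¹ * y) + h (y⁻¹ * b)) μ)),
            Finset.sum_congr rfl eb, Finset.sum_const, hndef, nsmul_eq_mul]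
          ring
        have i2 : (∫ y, ((∑ l ∈ Finset.range j, (h ((x l)⁻¹ * y) + h (y⁻¹ * x l))) + h 1) ∂μ)
            = 2 * (j:ℝ) * I + h 1 := by
          rw [integral_add (hIntc _ hccont2) (integrable_const _),
            integral_finset_sum _ (fun l _ => (hIntc _ ((hcont1 (x l)⁻¹).add (hcont2 (x l))) :
              Integrable (fun y => h ((x l)⁻¹ * y) + h (y⁻¹ * x l)) μ)),
            Finset.sum_congr rfl el, Finset.sum_const, Finset.card_range, nsmul_eq_mul,
            integral_const]
          simp [measure_univ]
          ring
        have hPhi : (∫ y, (-t * (∑ b ∈ B, (h (b⁻¹ * y) + h (y⁻¹ * b)))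
              + t ^ 2 * ((∑ l ∈ Finset.range j, (h ((x l)⁻¹ * y) + h (y⁻¹ * x l))) + h 1)) ∂μ)
            = -t * (2 * (n:ℝ) * I) + t ^ 2 * (2 * (j:ℝ) * I + h 1) := by
          rw [integral_add (hIntc (fun y => -t * (∑ b ∈ B, (h (b⁻¹ * y) + h (y⁻¹ * b))))
                (continuous_const.mul hccont))
              (hIntc (fun y => t ^ 2 * ((∑ l ∈ Finset.range j, (h ((x l)⁻¹ * y) + h (y⁻¹ * x l))) + h 1))
                (continuous_const.mul (hccont2.add continuous_const))),
            integral_const_mul, integral_const_mul, i1, i2]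
        have hpos0 := integral_nonneg (μ := μ) (Pi.le_def.mpr key)
        rw [integral_add (integrable_const _) (hIntc _ hcontPhi), integral_const] at hpos0
        simp only [probReal_univ, one_smul] at hpos0
        rw [hPhi] at hpos0
        have hpos : 0 ≤ (S - t * (2 * ((k : ℝ) - ((j:ℕ)+1:ℕ)) * n * I
                  + ∑ b ∈ B, ∑ l ∈ Finset.range j, (h (b⁻¹ * x l) + h ((x l)⁻¹ * b)))
              + t ^ 2 * (((k : ℝ) - ((j:ℕ)+1:ℕ)) * h 1
                  + (((k : ℝ) - ((j:ℕ)+1:ℕ)) * (((k : ℝ) - ((j:ℕ)+1:ℕ)) - 1)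
                     + 2 * ((j:ℕ)+1:ℕ) * ((k : ℝ) - ((j:ℕ)+1:ℕ))) * I
                  + ∑ l ∈ Finset.range j, ∑ l' ∈ Finset.range j, h ((x l)⁻¹ * x l')))
              + (-t * (2 * (n:ℝ) * I) + t ^ 2 * (2 * (j:ℝ) * I + h 1)) := hpos0
        refine le_trans hpos (le_of_eq ?_)
        push_cast
        ring
    -- specialize to i = k
    have h0 := claim k le_rfl (fun _ => 1)
    simp only [Nat.sub_self, Nat.cast_zero, sub_zero, Finset.range_zero,
      Finset.sum_empty, add_zero] at h0
    have e3 : (n:ℝ)^2*(h 1 - I)/k = (n:ℝ)^2*(h 1)/k - (n:ℝ)^2*I/k := by ring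
    have h0' : 0 ≤ S - 2*(n:ℝ)^2*I + ((n:ℝ)^2*(h 1)/k + (n:ℝ)^2*I - (n:ℝ)^2*I/k) := by
      refine le_of_le_of_eq h0 ?_
      rw [htdef, Finset.sum_const_zero]
      field_simp
      ring
    linarith
  -- take limit k → ∞
  have hS : (n : ℝ) ^ 2 * I ≤ S := by
    have htend : Filter.Tendsto
        (fun k : ℕ => (n : ℝ) ^ 2 * I - (n : ℝ) ^ 2 * (h 1 - I) / k)
        Filter.atTop (nhds ((n : ℝ) ^ 2 * I - 0)) :=
      Filter.Tendsto.sub tendsto_const_nhds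
        (tendsto_const_div_atTop_nhds_zero_nat _)
    rw [sub_zero] at htend
    exact le_of_tendsto htend (Filter.eventually_atTop.2 ⟨1, fun k hk => hlow k hk⟩)
  rcases Nat.eq_zero_or_pos n with hn | hn
  · rw [hn]
    simpa using div_nonneg hh1 hint.le
  · have hnpos : (0 : ℝ) < n := Nat.cast_pos.mpr hn
    have hnI : (n : ℝ) * I ≤ h 1 := by
      have h2 : (n : ℝ) * ((n:ℝ) * I) ≤ (n : ℝ) * h 1 := by
        calc (n : ℝ) * ((n:ℝ) * I) = (n:ℝ)^2 * I := by ring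
          _ ≤ S := hS
          _ ≤ (n : ℝ) * h 1 := hSub
      exact le_of_mul_le_mul_left h2 hnpos
    rw [le_div_iff₀ hint]
    exact hnI
end

section
/- The function h₀ : U(d) → ℝ defined by h₀(Z) = ∑_{i,j=1}^d |z_{ij}|⁴ is positive definite on the unitary group U(d): for any unitary matrices U₁,...,U_m and complex numbers c₁,...,c_m, ∑_{r,t=1}^m h₀(U_r* U_t) conj(c_r) c_t ≥ 0. -/
open scoped ComplexOrder

/-- `h₀(Z) = ∑_{i,j} |z_{ij}|⁴` on the unitary group `U(d)`. -/
noncomputable def h0 {d : ℕ} (Z : Matrix.unitaryGroup (Fin d) ℂ) : ℝ :=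
  ∑ i, ∑ j, ‖(Z : Matrix (Fin d) (Fin d) ℂ) i j‖ ^ 4

private lemma gram_nonneg {ι : Type*} [Fintype ι] (f : ι → ℂ) :
    0 ≤ ∑ p, ∑ q, (starRingEnd ℂ) (f p) * f q := by
  have h : (∑ p, ∑ q, (starRingEnd ℂ) (f p) * f q)
      = (starRingEnd ℂ) (∑ q, f q) * ∑ q, f q := by
    rw [map_sum, Finset.sum_mul]
    exact Finset.sum_congr rfl fun p _ => (Finset.mul_sum _ _ _).symm
  rw [h, starRingEnd_apply]
  exact star_mul_self_nonneg _

/-- The function `h₀(Z) = ∑_{i,j} |z_{ij}|⁴` is positive definite on `U(d)`: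
for any unitaries `U₁,…,U_m` and complex numbers `c₁,…,c_m`,
`∑_{r,t} h₀(U_r* U_t) conj(c_r) c_t ≥ 0`. -/
theorem h0_posDef {d : ℕ} (m : ℕ) (U : Fin m → Matrix.unitaryGroup (Fin d) ℂ)
    (c : Fin m → ℂ) :
    0 ≤ ∑ r, ∑ t, (starRingEnd ℂ) (c r) * c t * (h0 ((U r)⁻¹ * U t) : ℂ) := by
  classical
  set M : Fin m → Matrix (Fin d) (Fin d) ℂ := fun s => (U s : Matrix (Fin d) (Fin d) ℂ) with hM
  -- v = (k, k', l, l'); pairs (k,l) and (k',l')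
  set E : (Fin m × Fin d) → (Fin d × Fin d × Fin d × Fin d) → ℂ :=
    fun p v => c p.1 * ((M p.1 v.1 p.2 * (starRingEnd ℂ) (M p.1 v.2.2.1 p.2)) *
      (M p.1 v.2.1 p.2 * (starRingEnd ℂ) (M p.1 v.2.2.2 p.2))) with hE
  have hZ : ∀ r t i j, ((((U r)⁻¹ * U t : Matrix.unitaryGroup (Fin d) ℂ)) :
      Matrix (Fin d) (Fin d) ℂ) i j = ∑ k, (starRingEnd ℂ) (M r k i) * M t k j := by
    intro r t i j
    show ((U r)⁻¹ * U t : Matrix.unitaryGroup (Fin d) ℂ).1 i j = _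
    rw [Matrix.UnitaryGroup.mul_val, Matrix.UnitaryGroup.inv_val, Matrix.mul_apply]
    simp [Matrix.star_apply, hM]
  have expand : ∀ r t, (starRingEnd ℂ) (c r) * c t * (h0 ((U r)⁻¹ * U t) : ℂ)
      = ∑ i, ∑ j, ∑ v : Fin d × Fin d × Fin d × Fin d,
          (starRingEnd ℂ) (E (r, i) v) * E (t, j) v := by
    intro r t
    have habs : ∀ i j : Fin d,
        ((‖(((((U r)⁻¹ * U t : Matrix.unitaryGroup (Fin d) ℂ)) :
          Matrix (Fin d) (Fin d) ℂ) i j)‖ : ℂ)) ^ 4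
        = ∑ k, ∑ k', ∑ l, ∑ l',
            ((((starRingEnd ℂ) (M r k i) * M r l i) * (M t k j * (starRingEnd ℂ) (M t l j))) *
             (((starRingEnd ℂ) (M r k' i) * M r l' i) *
              (M t k' j * (starRingEnd ℂ) (M t l' j)))) := by
      intro i j
      set z : ℂ := ((((U r)⁻¹ * U t : Matrix.unitaryGroup (Fin d) ℂ)) :
          Matrix (Fin d) (Fin d) ℂ) i j with hz
      have h1 : ((‖z‖ : ℂ)) ^ 4 = (z * (starRingEnd ℂ) z) ^ 2 := by
        rw [Complex.mul_conj, ← Complex.sq_norm, Complex.ofReal_pow]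
        ring
      have h2 : z * (starRingEnd ℂ) z
          = ∑ k, ∑ l, ((starRingEnd ℂ) (M r k i) * M r l i) *
              (M t k j * (starRingEnd ℂ) (M t l j)) := by
        rw [hz, hZ r t i j, map_sum, Finset.sum_mul_sum]
        refine Finset.sum_congr rfl fun k _ => Finset.sum_congr rfl fun l _ => ?_
        simp only [map_mul, Complex.conj_conj, RingHomCompTriple.comp_apply, RingHom.id_apply]
        ring
      rw [h1, h2, pow_two, Finset.sum_mul_sum]
      refine Finset.sum_congr rfl fun k _ => Finset.sum_congr rfl fun k' _ => ?_
      rw [Finset.sum_mul_sum]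
    unfold h0
    rw [Complex.ofReal_sum, Finset.mul_sum]
    refine Finset.sum_congr rfl fun i _ => ?_
    rw [Complex.ofReal_sum, Finset.mul_sum]
    refine Finset.sum_congr rfl fun j _ => ?_
    rw [Complex.ofReal_pow, habs i j]
    simp only [Fintype.sum_prod_type, Finset.mul_sum]
    refine Finset.sum_congr rfl fun k _ => Finset.sum_congr rfl fun k' _ =>
      Finset.sum_congr rfl fun l _ => Finset.sum_congr rfl fun l' _ => ?_
    simp only [hE, map_mul, Complex.conj_conj, RingHom.id_apply]
    ring
  calc (0:ℂ) ≤ ∑ v : Fin d × Fin d × Fin d × Fin d,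
        ∑ p : Fin m × Fin d, ∑ q : Fin m × Fin d, (starRingEnd ℂ) (E p v) * E q v :=
        Finset.sum_nonneg fun v _ => gram_nonneg fun p => E p v
    _ = ∑ p : Fin m × Fin d, ∑ q : Fin m × Fin d, ∑ v : Fin d × Fin d × Fin d × Fin d,
          (starRingEnd ℂ) (E p v) * E q v := by
        rw [Finset.sum_comm]
        exact Finset.sum_congr rfl fun p _ => Finset.sum_comm
    _ = ∑ r, ∑ i, ∑ q : Fin m × Fin d, ∑ v : Fin d × Fin d × Fin d × Fin d,
          (starRingEnd ℂ) (E (r, i) v) * E q v :=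
        Fintype.sum_prod_type _
    _ = ∑ r, ∑ i, ∑ t, ∑ j, ∑ v : Fin d × Fin d × Fin d × Fin d,
          (starRingEnd ℂ) (E (r, i) v) * E (t, j) v :=
        Finset.sum_congr rfl fun r _ => Finset.sum_congr rfl fun i _ => Fintype.sum_prod_type _
    _ = ∑ r, ∑ t, ∑ i, ∑ j, ∑ v : Fin d × Fin d × Fin d × Fin d,
          (starRingEnd ℂ) (E (r, i) v) * E (t, j) v :=
        Finset.sum_congr rfl fun r _ => Finset.sum_comm
    _ = ∑ r, ∑ t, (starRingEnd ℂ) (c r) * c t * (h0 ((U r)⁻¹ * U t) : ℂ) :=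
        Finset.sum_congr rfl fun r _ => Finset.sum_congr rfl fun t _ => (expand r t).symm
end

section
/- For any unitary matrices U₁,...,U_m in U(d) and complex scalars c₁,...,c_m, the sum ∑_{r,t} h₀(U_r* U_t) conj(c_r) c_t equals the squared Hilbert–Schmidt norm ‖∑_t c_t Q_t‖²_{HS}, where Q_t = ∑_{j=1}^d P_{U_t e_j ⊗ U_t e_j} and h₀(Z) = ∑_{i,j} |z_{ij}|⁴. -/
/-- The rank-one operator `P_w : x ↦ ⟨x, w⟩ w`. -/
noncomputable def rankOneProj {H : Type*} [NormedAddCommGroup H]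
    [InnerProductSpace ℂ H] (w : H) : H →ₗ[ℂ] H :=
  ((innerSL ℂ w).smulRight w).toLinearMap

/-- `ℂ^d ⊗ ℂ^d`, modelled as `EuclideanSpace ℂ (Fin d × Fin d)`. -/
noncomputable abbrev TensorSq (d : ℕ) := EuclideanSpace ℂ (Fin d × Fin d)

/-- The elementary tensor `v ⊗ v` of a vector `v ∈ ℂ^d`. -/
noncomputable def tensorSelf {d : ℕ} (v : EuclideanSpace ℂ (Fin d)) : TensorSq d :=
  WithLp.toLp 2 (fun p : Fin d × Fin d => v p.1 * v p.2)

/-- The `j`-th column of a matrix, i.e. the image `M e_j` of the `j`-th standard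
basis vector, as a vector of `ℂ^d`. -/
def col {d : ℕ} (M : Matrix (Fin d) (Fin d) ℂ) (j : Fin d) :
    EuclideanSpace ℂ (Fin d) := WithLp.toLp 2 (fun i => M i j)

open scoped ComplexConjugate

local notation "⟪" x ", " y "⟫" => @inner ℂ _ _ x y

lemma rankOneProj_apply {H : Type*} [NormedAddCommGroup H]
    [InnerProductSpace ℂ H] (w x : H) : rankOneProj w x = ⟪w, x⟫ • w := rfl

lemma adjoint_rankOneProj {H : Type*} [NormedAddCommGroup H] [InnerProductSpace ℂ H]
    [FiniteDimensional ℂ H] (w : H) :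
    LinearMap.adjoint (rankOneProj w) = rankOneProj w := by
  symm
  rw [LinearMap.eq_adjoint_iff]
  intro x y
  simp only [rankOneProj_apply, inner_smul_left, inner_smul_right,
    inner_conj_symm]
  ring

lemma inner_tensorSelf {d : ℕ} (u v : EuclideanSpace ℂ (Fin d)) :
    ⟪tensorSelf u, tensorSelf v⟫ = ⟪u, v⟫ ^ 2 := by
  simp only [tensorSelf, PiLp.inner_apply, RCLike.inner_apply]
  rw [Fintype.sum_prod_type, sq, Finset.sum_mul_sum]
  refine Finset.sum_congr rfl fun i _ => Finset.sum_congr rfl fun j _ => ?_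
  simp only [map_mul]
  ring

lemma trace_rankOneProj_comp {d : ℕ} (v w : TensorSq d) :
    LinearMap.trace ℂ (TensorSq d) (rankOneProj v ∘ₗ rankOneProj w) =
      ⟪v, w⟫ * ⟪w, v⟫ := by
  classical
  rw [LinearMap.trace_eq_matrix_trace ℂ (PiLp.basisFun 2 ℂ (Fin d × Fin d))]
  have h1 : ∀ (z : TensorSq d) (p : Fin d × Fin d),
      ⟪z, (PiLp.single 2 p 1 : TensorSq d)⟫
        = conj (z p) := by
    intro z p
    simp [PiLp.inner_apply, RCLike.inner_apply, Pi.single_apply, Finset.sum_ite_eq',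
      PiLp.ofLp_single]
  simp only [Matrix.trace, Matrix.diag, LinearMap.toMatrix_apply,
    PiLp.basisFun_repr, PiLp.basisFun_apply, LinearMap.comp_apply, rankOneProj_apply,
    inner_smul_right, h1]
  simp only [PiLp.smul_apply, smul_eq_mul, PiLp.inner_apply, RCLike.inner_apply,
    Finset.mul_sum, Finset.sum_mul]
  refine Finset.sum_congr rfl fun p _ => Finset.sum_congr rfl fun q _ => ?_
  ring

set_option maxHeartbeats 1000000 in
/-- For unitaries `U₁,…,U_m` and scalars `c₁,…,c_m`, the sum
`∑_{r,t} h₀(U_r* U_t) conj(c_r) c_t` equals the squared Hilbert–Schmidt norm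
`‖∑_t c_t Q_t‖²_HS = tr (S S*)`, where `Q_t = ∑_j P_{U_t e_j ⊗ U_t e_j}` and
`S = ∑_t c_t Q_t`. -/
theorem sum_h0_eq_hs_norm_sq {d : ℕ} (m : ℕ)
    (U : Fin m → Matrix.unitaryGroup (Fin d) ℂ) (c : Fin m → ℂ)
    (Q : Fin m → (TensorSq d →ₗ[ℂ] TensorSq d))
    (hQ : ∀ t, Q t = ∑ j, rankOneProj (tensorSelf (col (U t : Matrix (Fin d) (Fin d) ℂ) j))) :
    (∑ r, ∑ t, (starRingEnd ℂ) (c r) * c t * (h0 ((U r)⁻¹ * U t) : ℂ)) =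
      LinearMap.trace ℂ (TensorSq d)
        ((∑ t, c t • Q t) ∘ₗ LinearMap.adjoint (∑ t, c t • Q t)) := by
  -- adjoint of Q t is Q t
  have hadj : ∀ t, LinearMap.adjoint (Q t) = Q t := by
    intro t
    rw [hQ t, map_sum]
    exact Finset.sum_congr rfl fun j _ => adjoint_rankOneProj _
  have hadjS : LinearMap.adjoint (∑ t, c t • Q t) = ∑ r, conj (c r) • Q r := by
    rw [map_sum]
    exact Finset.sum_congr rfl fun r _ => by
      rw [map_smulₛₗ, hadj]
  rw [hadjS, ← Module.End.mul_eq_comp, Finset.sum_mul_sum]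
  simp only [map_sum]
  rw [Finset.sum_comm]
  refine Finset.sum_congr rfl fun t _ => Finset.sum_congr rfl fun r _ => ?_
  rw [show (c t • Q t) * ((starRingEnd ℂ) (c r) • Q r)
      = (c t * conj (c r)) • (Q t ∘ₗ Q r) by
    rw [smul_mul_smul_comm, Module.End.mul_eq_comp], map_smul]
  -- reduce to trace of Q t ∘ Q r
  have hz : ∀ i j, ((((U r)⁻¹ * U t : Matrix.unitaryGroup (Fin d) ℂ) :
      Matrix (Fin d) (Fin d) ℂ)) i j
      = ⟪col (U r : Matrix (Fin d) (Fin d) ℂ) i, col (U t : Matrix (Fin d) (Fin d) ℂ) j⟫ := by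
    intro i j
    rw [← Unitary.star_eq_inv]
    simp [Matrix.mul_apply, Matrix.star_apply, col, PiLp.inner_apply, RCLike.inner_apply, mul_comm]
  have htr : LinearMap.trace ℂ (TensorSq d) (Q t ∘ₗ Q r)
      = ∑ j, ∑ k, (⟪col (U t : Matrix (Fin d) (Fin d) ℂ) j,
          col (U r : Matrix (Fin d) (Fin d) ℂ) k⟫ ^ 2) *
        (⟪col (U r : Matrix (Fin d) (Fin d) ℂ) k,
          col (U t : Matrix (Fin d) (Fin d) ℂ) j⟫ ^ 2) := by
    rw [hQ t, hQ r, ← Module.End.mul_eq_comp, Finset.sum_mul_sum]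
    simp only [map_sum, Module.End.mul_eq_comp]
    refine Finset.sum_congr rfl fun j _ => Finset.sum_congr rfl fun k _ => ?_
    rw [trace_rankOneProj_comp, inner_tensorSelf, inner_tensorSelf]
  rw [htr]
  -- expand h0
  have habs : ∀ z : ℂ, ((‖z‖ ^ 4 : ℝ) : ℂ) = z ^ 2 * conj z ^ 2 := by
    intro z
    have : ((‖z‖ ^ 2 : ℝ) : ℂ) = z * conj z := by
      rw [Complex.sq_norm, Complex.mul_conj]
    calc ((‖z‖ ^ 4 : ℝ) : ℂ) = ((‖z‖ ^ 2 : ℝ) : ℂ) ^ 2 := by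
          push_cast; ring
      _ = (z * conj z) ^ 2 := by rw [this]
      _ = z ^ 2 * conj z ^ 2 := by ring
  rw [h0]
  simp only [hz]
  push_cast
  simp only [Finset.mul_sum, Finset.smul_sum]
  rw [Finset.sum_comm]
  refine Finset.sum_congr rfl fun k _ => Finset.sum_congr rfl fun j _ => ?_
  set z := ⟪col (U r : Matrix (Fin d) (Fin d) ℂ) j, col (U t : Matrix (Fin d) (Fin d) ℂ) k⟫
    with hzdef
  have hconj : ⟪col (U t : Matrix (Fin d) (Fin d) ℂ) k,
      col (U r : Matrix (Fin d) (Fin d) ℂ) j⟫ = conj z := by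
    rw [hzdef, ← inner_conj_symm]
  have habs' : ((‖z‖ : ℝ) : ℂ) ^ 4 = z ^ 2 * conj z ^ 2 := by
    have h := habs z
    push_cast at h
    exact h
  rw [hconj, smul_eq_mul, habs']
  ring
end

section
/- Let U₁, ..., U_m ∈ U(d) be unitary matrices whose column systems form m pairwise mutually unbiased orthonormal bases of ℂ^d, i.e., every entry of U_r* U_t has absolute value 1/√d for r ≠ t. Suppose h : U(d) → ℝ is a continuous positive definite function with h(Z) ≤ 0 whenever all entries of Z have absolute value 1/√d, and ∫_{U(d)} h dμ > 0 where μ is normalized Haar measure. Then m ≤ h(I) / ∫ h dμ. -/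
open MeasureTheory
open scoped ComplexOrder

/-- Let `U₁,…,U_m ∈ U(d)` form pairwise mutually unbiased bases, i.e. every entry
of `U_r* U_t` has absolute value `1/√d` for `r ≠ t`.  If `h : U(d) → ℝ` is a
continuous positive definite function with `h(Z) ≤ 0` whenever all entries of `Z`
have absolute value `1/√d`, and `∫ h dμ > 0` for the normalized Haar measure `μ`,
then `m ≤ h(I) / ∫ h dμ`. -/
theorem mub_witness_bound {d : ℕ}
    [IsTopologicalGroup (Matrix.unitaryGroup (Fin d) ℂ)]
    [CompactSpace (Matrix.unitaryGroup (Fin d) ℂ)]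
    [MeasurableSpace (Matrix.unitaryGroup (Fin d) ℂ)]
    [BorelSpace (Matrix.unitaryGroup (Fin d) ℂ)]
    (μ : Measure (Matrix.unitaryGroup (Fin d) ℂ)) [μ.IsHaarMeasure]
    [IsProbabilityMeasure μ]
    (h : Matrix.unitaryGroup (Fin d) ℂ → ℝ) (hcont : Continuous h)
    (hpd : IsPosDefReal h)
    (hneg : ∀ Z : Matrix.unitaryGroup (Fin d) ℂ,
      (∀ i j, ‖(Z : Matrix (Fin d) (Fin d) ℂ) i j‖ = 1 / Real.sqrt d) →
        h Z ≤ 0)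
    (hint : 0 < ∫ Z, h Z ∂μ)
    (m : ℕ) (U : Fin m → Matrix.unitaryGroup (Fin d) ℂ)
    (hmub : ∀ r t, r ≠ t → ∀ i j,
      ‖(star ((U r : Matrix (Fin d) (Fin d) ℂ)) *
        (U t : Matrix (Fin d) (Fin d) ℂ)) i j‖ = 1 / Real.sqrt d) :
    (m : ℝ) ≤ h 1 / ∫ Z, h Z ∂μ := by
  set I : ℝ := ∫ Z, h Z ∂μ with hIdef
  -- real-coefficient positive definiteness
  have hpdR : ∀ (n : ℕ) (w : Fin n → Matrix.unitaryGroup (Fin d) ℂ) (c : Fin n → ℝ),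
      0 ≤ ∑ i, ∑ j, c i * c j * h ((w i)⁻¹ * w j) := by
    intro n w c
    have H := hpd n w (fun i => (c i : ℂ))
    have key : (∑ i, ∑ j, (starRingEnd ℂ) ((c i : ℂ)) * (c j : ℂ)
          * (h ((w i)⁻¹ * w j) : ℂ))
        = ((∑ i, ∑ j, c i * c j * h ((w i)⁻¹ * w j) : ℝ) : ℂ) := by
      push_cast [Complex.conj_ofReal]
      ring
    rw [key] at H
    exact Complex.zero_le_real.mp H
  -- symmetry of positive definite functions
  have hsymm : ∀ g : Matrix.unitaryGroup (Fin d) ℂ, h g⁻¹ = h g := by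
    intro g
    have H := hpd 2 ![1, g] ![1, Complex.I]
    rw [Complex.le_def] at H
    have him := H.2
    simp [Fin.sum_univ_two, Complex.ext_iff, Complex.mul_im, Complex.mul_re] at him
    linarith
  -- integrability of continuous functions
  have hintg : ∀ f : Matrix.unitaryGroup (Fin d) ℂ → ℝ, Continuous f → Integrable f μ := fun f hf =>
    hf.integrable_of_hasCompactSupport (HasCompactSupport.of_compactSpace f)
  -- translation invariance
  have hmarg : ∀ g : Matrix.unitaryGroup (Fin d) ℂ, (∫ x, h (g * x) ∂μ) = I := fun g =>
    integral_mul_left_eq_self h g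
  -- the key induction
  have key : ∀ (s : ℝ) (k : ℕ) (n : ℕ) (w : Fin n → Matrix.unitaryGroup (Fin d) ℂ) (c : Fin n → ℝ),
      0 ≤ (∑ i, ∑ j, c i * c j * h ((w i)⁻¹ * w j))
        + 2*s*k*(∑ i, c i)*I + s^2*k*(h 1) + s^2*k*((k:ℝ)-1)*I := by
    intro s k
    induction k with
    | zero => intro n w c; simpa using hpdR n w c
    | succ k ih =>
      intro n w c
      -- the pointwise inequality for the extended configuration
      have hpt : ∀ x : Matrix.unitaryGroup (Fin d) ℂ,
          0 ≤ ((∑ i, ∑ j, c i * c j * h ((w i)⁻¹ * w j))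
              + 2*s*(∑ i, c i * h ((w i)⁻¹ * x)) + s^2 * h 1)
            + (2*s*k*((∑ i, c i) + s)*I + s^2*k*(h 1) + s^2*k*((k:ℝ)-1)*I) := by
        intro x
        have H := ih (n+1) (Fin.snoc w x) (Fin.snoc c s)
        have hsum : (∑ i : Fin (n+1), Fin.snoc c s i) = (∑ i, c i) + s := by
          rw [Fin.sum_univ_castSucc]
          simp
        have hexp : (∑ i : Fin (n+1), ∑ j : Fin (n+1),
              (Fin.snoc c s : Fin (n+1) → ℝ) i * (Fin.snoc c s : Fin (n+1) → ℝ) j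
                * h (((Fin.snoc w x : Fin (n+1) → Matrix.unitaryGroup (Fin d) ℂ) i)⁻¹ * (Fin.snoc w x : Fin (n+1) → Matrix.unitaryGroup (Fin d) ℂ) j))
            = (∑ i, ∑ j, c i * c j * h ((w i)⁻¹ * w j))
              + 2*s*(∑ i, c i * h ((w i)⁻¹ * x)) + s^2 * h 1 := by
          rw [Fin.sum_univ_castSucc]
          have inner1 : ∀ i : Fin n, (∑ j : Fin (n+1),
              (Fin.snoc c s : Fin (n+1) → ℝ) (Fin.castSucc i) * (Fin.snoc c s : Fin (n+1) → ℝ) j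
                * h (((Fin.snoc w x : Fin (n+1) → Matrix.unitaryGroup (Fin d) ℂ) (Fin.castSucc i))⁻¹ * (Fin.snoc w x : Fin (n+1) → Matrix.unitaryGroup (Fin d) ℂ) j))
              = (∑ j, c i * c j * h ((w i)⁻¹ * w j)) + c i * s * h ((w i)⁻¹ * x) := by
            intro i
            rw [Fin.sum_univ_castSucc]
            simp
          have inner2 : (∑ j : Fin (n+1),
              (Fin.snoc c s : Fin (n+1) → ℝ) (Fin.last n) * (Fin.snoc c s : Fin (n+1) → ℝ) j
                * h (((Fin.snoc w x : Fin (n+1) → Matrix.unitaryGroup (Fin d) ℂ) (Fin.last n))⁻¹ * (Fin.snoc w x : Fin (n+1) → Matrix.unitaryGroup (Fin d) ℂ) j))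
              = (∑ j, s * c j * h ((w j)⁻¹ * x)) + s * s * h 1 := by
            rw [Fin.sum_univ_castSucc]
            simp only [Fin.snoc_castSucc, Fin.snoc_last, inv_mul_cancel]
            congr 1
            refine Finset.sum_congr rfl fun j _ => ?_
            have : h (x⁻¹ * w j) = h ((w j)⁻¹ * x) := by
              rw [← hsymm (x⁻¹ * w j), mul_inv_rev, inv_inv]
            rw [this]
          rw [inner2, Finset.sum_congr rfl fun i _ => inner1 i, Finset.sum_add_distrib]
          have e1 : (∑ i, c i * s * h ((w i)⁻¹ * x)) = s * ∑ i, c i * h ((w i)⁻¹ * x) := by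
            rw [Finset.mul_sum]; exact Finset.sum_congr rfl fun i _ => by ring
          have e2 : (∑ j, s * c j * h ((w j)⁻¹ * x)) = s * ∑ i, c i * h ((w i)⁻¹ * x) := by
            rw [Finset.mul_sum]; exact Finset.sum_congr rfl fun i _ => by ring
          rw [e1, e2]; ring
        rw [hexp, hsum] at H
        linarith
      -- integrate the pointwise inequality over x
      have hg : Continuous fun x : Matrix.unitaryGroup (Fin d) ℂ => ∑ i, c i * h ((w i)⁻¹ * x) := by
        apply continuous_finset_sum
        intro i _
        exact continuous_const.mul (hcont.comp (continuous_mul_left _))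
      have hgint : (∫ x, (∑ i, c i * h ((w i)⁻¹ * x)) ∂μ) = (∑ i, c i) * I := by
        rw [integral_finset_sum]
        · rw [Finset.sum_mul]
          refine Finset.sum_congr rfl fun i _ => ?_
          rw [integral_const_mul, hmarg]
        · exact fun i _ => (hintg _ (hcont.comp (continuous_mul_left _))).const_mul _
      have hnn : 0 ≤ ∫ x, (((∑ i, ∑ j, c i * c j * h ((w i)⁻¹ * w j))
              + 2*s*(∑ i, c i * h ((w i)⁻¹ * x)) + s^2 * h 1)
            + (2*s*k*((∑ i, c i) + s)*I + s^2*k*(h 1) + s^2*k*((k:ℝ)-1)*I)) ∂μ :=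
        integral_nonneg hpt
      have hcalc : (∫ x, (((∑ i, ∑ j, c i * c j * h ((w i)⁻¹ * w j))
              + 2*s*(∑ i, c i * h ((w i)⁻¹ * x)) + s^2 * h 1)
            + (2*s*k*((∑ i, c i) + s)*I + s^2*k*(h 1) + s^2*k*((k:ℝ)-1)*I)) ∂μ)
          = (∑ i, ∑ j, c i * c j * h ((w i)⁻¹ * w j))
              + 2*s*(∑ i, c i)*I + s^2 * h 1
            + (2*s*k*((∑ i, c i) + s)*I + s^2*k*(h 1) + s^2*k*((k:ℝ)-1)*I) := by
        have : (fun x : Matrix.unitaryGroup (Fin d) ℂ => (((∑ i, ∑ j, c i * c j * h ((w i)⁻¹ * w j))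
              + 2*s*(∑ i, c i * h ((w i)⁻¹ * x)) + s^2 * h 1)
            + (2*s*k*((∑ i, c i) + s)*I + s^2*k*(h 1) + s^2*k*((k:ℝ)-1)*I)))
            = (fun x : Matrix.unitaryGroup (Fin d) ℂ => (2*s) * (∑ i, c i * h ((w i)⁻¹ * x))
              + ((∑ i, ∑ j, c i * c j * h ((w i)⁻¹ * w j)) + s^2 * h 1
                + (2*s*k*((∑ i, c i) + s)*I + s^2*k*(h 1) + s^2*k*((k:ℝ)-1)*I))) := by
          funext x; ring
        rw [this, integral_add ((hintg _ hg).const_mul _) (integrable_const _),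
          integral_const_mul, hgint, integral_const]
        simp [measure_univ]
        ring
      rw [hcalc] at hnn
      push_cast
      nlinarith [hnn]
  have h1nn : 0 ≤ h 1 := by
    have := hpdR 1 (fun _ => 1) (fun _ => 1)
    simpa using this
  set A : ℝ := ∑ i, ∑ j, h ((U i)⁻¹ * U j) with hAdef
  have hAle : A ≤ m * h 1 := by
    rw [hAdef]
    calc ∑ i, ∑ j, h ((U i)⁻¹ * U j) ≤ ∑ _i : Fin m, h 1 := by
          refine Finset.sum_le_sum fun i _ => ?_
          have hsplit : ∑ j, h ((U i)⁻¹ * U j)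
              = h ((U i)⁻¹ * U i) + ∑ j ∈ Finset.univ.erase i, h ((U i)⁻¹ * U j) := by
            exact (Finset.add_sum_erase _ _ (Finset.mem_univ i)).symm
          rw [hsplit, inv_mul_cancel]
          have hrest : ∑ j ∈ Finset.univ.erase i, h ((U i)⁻¹ * U j) ≤ 0 := by
            refine Finset.sum_nonpos fun j hj => ?_
            have hji : i ≠ j := fun e => (Finset.mem_erase.mp hj).1 e.symm
            refine hneg _ fun a b => ?_
            have hco : (((U i)⁻¹ * U j : Matrix.unitaryGroup (Fin d) ℂ) : Matrix (Fin d) (Fin d) ℂ)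
                = star (U i : Matrix (Fin d) (Fin d) ℂ) * (U j : Matrix (Fin d) (Fin d) ℂ) := rfl
            rw [hco]
            exact hmub i j hji a b
          linarith
      _ = m * h 1 := by simp [mul_comm]
  have hkey : ∀ k : ℕ, 1 ≤ k → (m:ℝ)^2 * I ≤ A + (m:ℝ)^2 * (h 1 - I) / k := by
    intro k hk
    have hk0 : (0:ℝ) < k := by exact_mod_cast hk
    have H := key (-(m:ℝ)/k) k m U (fun _ => 1)
    have hone : (∑ i : Fin m, (1:ℝ)) = m := by simp
    have hsum1 : (∑ i, ∑ j, (1:ℝ) * 1 * h ((U i)⁻¹ * U j)) = A := by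
      rw [hAdef]; exact Finset.sum_congr rfl fun i _ => Finset.sum_congr rfl fun j _ => by ring
    rw [hsum1, hone] at H
    have hident : 2*(-(m:ℝ)/k)*k*(m:ℝ)*I + (-(m:ℝ)/k)^2*k*(h 1)
          + (-(m:ℝ)/k)^2*k*((k:ℝ)-1)*I
        = -((m:ℝ)^2*I) + (m:ℝ)^2*(h 1 - I)/k := by
      field_simp
      ring
    linarith [H, hident.symm.le, hident.le]
  have hlimit : (m:ℝ)^2 * I ≤ A := by
    have htend : Filter.Tendsto (fun k : ℕ => A + (m:ℝ)^2*(h 1 - I)/k)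
        Filter.atTop (nhds A) := by
      have h0 : Filter.Tendsto (fun k : ℕ => (m:ℝ)^2*(h 1 - I)/(k:ℝ))
          Filter.atTop (nhds 0) :=
        Filter.Tendsto.div_atTop tendsto_const_nhds tendsto_natCast_atTop_atTop
      simpa using tendsto_const_nhds.add h0
    exact ge_of_tendsto htend (Filter.eventually_atTop.mpr ⟨1, hkey⟩)
  rw [le_div_iff₀ hint]
  rcases Nat.eq_zero_or_pos m with hm | hm
  · simpa [hm] using h1nn
  · have hmpos : (0:ℝ) < m := by exact_mod_cast hm
    nlinarith [hlimit, hAle, hmpos]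
end

section
/- The number of pairwise mutually unbiased orthonormal bases of ℂ^d is at most d + 1. -/
open scoped ComplexConjugate

noncomputable def mubV (d : ℕ) (x : EuclideanSpace ℂ (Fin d)) :
    EuclideanSpace ℂ (Fin d × Fin d) :=
  WithLp.toLp 2 (fun p : Fin d × Fin d => x p.1 * conj (x p.2))

noncomputable def mubU (d : ℕ) : EuclideanSpace ℂ (Fin d × Fin d) :=
  WithLp.toLp 2 (fun p : Fin d × Fin d => if p.1 = p.2 then (1:ℂ) else 0)

lemma mubV_inner (d : ℕ) (x y : EuclideanSpace ℂ (Fin d)) :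
    (inner ℂ (mubV d x) (mubV d y) : ℂ) = (inner ℂ x y : ℂ) * conj (inner ℂ x y : ℂ) := by
  simp only [PiLp.inner_apply, RCLike.inner_apply, mubV, PiLp.toLp_apply, map_sum, map_mul,
    Complex.conj_conj]
  rw [Fintype.sum_prod_type, Finset.sum_mul_sum]
  apply Finset.sum_congr rfl
  intro a _
  apply Finset.sum_congr rfl
  intro b _
  ring

lemma mubU_inner_self (d : ℕ) : (inner ℂ (mubU d) (mubU d) : ℂ) = (d : ℂ) := by
  simp only [PiLp.inner_apply, RCLike.inner_apply, mubU, PiLp.toLp_apply]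
  rw [Fintype.sum_prod_type]
  simp

lemma mubU_inner_V (d : ℕ) (x : EuclideanSpace ℂ (Fin d)) :
    (inner ℂ (mubU d) (mubV d x) : ℂ) = (inner ℂ x x : ℂ) := by
  simp only [PiLp.inner_apply, RCLike.inner_apply, mubU, mubV, PiLp.toLp_apply]
  rw [Fintype.sum_prod_type]
  simp only [apply_ite, map_one, map_zero, ite_mul, one_mul, zero_mul]
  rw [Finset.sum_comm]
  simp [Finset.sum_ite_eq, mul_comm]

/-- The number of pairwise mutually unbiased orthonormal bases of `ℂ^d` (`d ≥ 2`)
is at most `d + 1`: if `B₁,…,B_m` are orthonormal bases of `ℂ^d` such that for any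
`r ≠ t` all the inner products between vectors of `B_r` and `B_t` have absolute
value `1/√d`, then `m ≤ d + 1`. -/
theorem mub_card_le (d : ℕ) (hd : 2 ≤ d) (m : ℕ)
    (B : Fin m → OrthonormalBasis (Fin d) ℂ (EuclideanSpace ℂ (Fin d)))
    (hmub : ∀ r t, r ≠ t → ∀ j k,
      ‖(inner ℂ (B r j) (B t k) : ℂ)‖ = 1 / Real.sqrt d) :
    m ≤ d + 1 := by
  classical
  have hd0 : (d : ℂ) ≠ 0 := by
    simp only [ne_eq, Nat.cast_eq_zero]; omega
  have hdR : (0:ℝ) < d := by positivity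
  -- orthonormality within a basis
  have hon : ∀ r j k, (inner ℂ (B r j) (B r k) : ℂ) = if j = k then 1 else 0 := by
    intro r j k
    have := (B r).orthonormal
    rw [orthonormal_iff_ite] at this
    exact this j k
  -- the shifted projection vectors
  set W : Fin m → Fin d → EuclideanSpace ℂ (Fin d × Fin d) :=
    fun r j => mubV d (B r j) - ((d:ℂ)⁻¹) • mubU d with hWdef
  have hUV : ∀ r j, (inner ℂ (mubU d) (mubV d (B r j)) : ℂ) = 1 := by
    intro r j
    rw [mubU_inner_V, hon r j j, if_pos rfl]
  have hUW : ∀ r j, (inner ℂ (mubU d) (W r j) : ℂ) = 0 := by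
    intro r j
    rw [hWdef]
    simp only [inner_sub_right, inner_smul_right, hUV, mubU_inner_self]
    field_simp
    ring
  have hWU : ∀ r j, (inner ℂ (W r j) (mubU d) : ℂ) = 0 := by
    intro r j
    rw [← inner_conj_symm, hUW, map_zero]
  have hWW : ∀ r j t k, (inner ℂ (W r j) (W t k) : ℂ)
      = (inner ℂ (mubV d (B r j)) (mubV d (B t k)) : ℂ) - (d:ℂ)⁻¹ := by
    intro r j t k
    rw [hWdef]
    simp only [inner_sub_left, inner_sub_right, inner_smul_left, inner_smul_right,
      mubU_inner_self, hUV]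
    have h1 : (inner ℂ (mubV d (B r j)) (mubU d) : ℂ) = 1 := by
      rw [← inner_conj_symm, hUV, map_one]
    rw [h1]
    have : conj ((d:ℂ)⁻¹) = (d:ℂ)⁻¹ := by
      simp [map_inv₀]
    rw [this]
    field_simp
    ring
  -- cross terms vanish
  have hW1 : ∀ r t, r ≠ t → ∀ j k, (inner ℂ (W r j) (W t k) : ℂ) = 0 := by
    intro r t hrt j k
    rw [hWW, mubV_inner, Complex.mul_conj]
    have h2 : Complex.normSq (inner ℂ (B r j) (B t k) : ℂ)
        = (‖(inner ℂ (B r j) (B t k) : ℂ)‖)^2 := (Complex.sq_norm _).symm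
    rw [h2, hmub r t hrt j k]
    rw [div_pow, one_pow, Real.sq_sqrt (le_of_lt hdR)]
    push_cast
    field_simp
    ring
  -- same-basis terms
  have hW2 : ∀ r j k, (inner ℂ (W r j) (W r k) : ℂ)
      = (if j = k then 1 else 0) - (d:ℂ)⁻¹ := by
    intro r j k
    rw [hWW, mubV_inner, hon]
    by_cases h : j = k <;> simp [h]
  -- the linearly independent family
  set ι : Fin (d-1) → Fin d := Fin.castLE (Nat.sub_le d 1) with hιdef
  have hι : Function.Injective ι := Fin.castLE_injective _
  set F : (Fin m × Fin (d-1)) ⊕ Unit → EuclideanSpace ℂ (Fin d × Fin d) :=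
    Sum.elim (fun p => W p.1 (ι p.2)) (fun _ => mubU d) with hFdef
  have hli : LinearIndependent ℂ F := by
    rw [Fintype.linearIndependent_iff]
    intro g hg
    have key : ∀ y : EuclideanSpace ℂ (Fin d × Fin d),
        ∑ i, g i * (inner ℂ y (F i) : ℂ) = 0 := by
      intro y
      have h0 : (inner ℂ y (∑ i, g i • F i) : ℂ) = 0 := by
        rw [hg, inner_zero_right]
      rw [inner_sum] at h0
      simp only [inner_smul_right] at h0
      exact h0
    have hgu : g (Sum.inr ()) = 0 := by
      have h1 := key (mubU d)
      rw [Fintype.sum_sum_type] at h1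
      simp only [Sum.elim_inl, Sum.elim_inr, hFdef, hUW, mul_zero,
        Finset.sum_const_zero, zero_add, mubU_inner_self] at h1
      simp only [Finset.univ_unique, Finset.sum_singleton] at h1
      exact (mul_eq_zero.mp h1).resolve_right hd0
    have hgl : ∀ r k, g (Sum.inl (r, k)) = 0 := by
      intro r k
      -- equation from inner with W r (ι k)
      have heq : ∀ k : Fin (d-1),
          g (Sum.inl (r, k)) = (d:ℂ)⁻¹ * ∑ j, g (Sum.inl (r, j)) := by
        intro k
        have h1 := key (W r (ι k))
        rw [Fintype.sum_sum_type] at h1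
        simp only [hFdef, Sum.elim_inl, Sum.elim_inr, hWU, mul_zero,
          Finset.sum_const_zero, add_zero, Fintype.sum_prod_type] at h1
        rw [Finset.sum_eq_single_of_mem r (Finset.mem_univ r)] at h1
        · simp only [hW2] at h1
          have h2 : ∀ j : Fin (d-1),
              g (Sum.inl (r, j)) * ((if ι k = ι j then 1 else 0) - (d:ℂ)⁻¹)
              = (if k = j then g (Sum.inl (r, j)) else 0)
                - (d:ℂ)⁻¹ * g (Sum.inl (r, j)) := by
            intro j
            by_cases h : k = j
            · subst h; simp only [eq_self_iff_true, if_true]; ring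
            · rw [if_neg (fun hc => h (hι hc)), if_neg h]; ring
          rw [Finset.sum_congr rfl (fun j _ => h2 j)] at h1
          rw [Finset.sum_sub_distrib, Finset.sum_ite_eq, if_pos (Finset.mem_univ k)] at h1
          rw [← Finset.mul_sum] at h1
          linear_combination h1
        · intro t _ htr
          simp only [hW1 r t (fun h => htr h.symm), mul_zero, Finset.sum_const_zero]
      set S : ℂ := ∑ j, g (Sum.inl (r, j)) with hS
      have hSsum : S = (↑(d-1) : ℂ) * ((d:ℂ)⁻¹ * S) := by
        rw [hS]
        conv_lhs => rw [Finset.sum_congr rfl (fun j _ => heq j)]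
        simp [Finset.sum_const, Finset.card_univ, nsmul_eq_mul]
        exact Or.inl (Or.inl hS)
      have hd1 : ((d-1 : ℕ) : ℂ) = (d:ℂ) - 1 := by
        push_cast [Nat.cast_sub (by omega : 1 ≤ d)]
        ring
      have hS0 : S = 0 := by
        rw [hd1] at hSsum
        have : (d:ℂ) * S = ((d:ℂ) - 1) * S := by
          field_simp at hSsum
          linear_combination hSsum
        have h3 : S * 1 = 0 := by linear_combination this
        simpa using h3
      rw [heq k, hS0, mul_zero]
    intro i
    rcases i with ⟨r, k⟩ | u
    · exact hgl r k
    · cases u; exact hgu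
  have hcard := hli.fintype_card_le_finrank
  rw [finrank_euclideanSpace] at hcard
  simp only [Fintype.card_sum, Fintype.card_prod, Fintype.card_fin, Fintype.card_unit,
    Fintype.card_prod] at hcard
  -- hcard : m * (d-1) + 1 ≤ d * d
  have he : d - 1 + 1 = d := by omega
  set e := d - 1 with hedef
  have he1 : 1 ≤ e := by omega
  have hde : d = e + 1 := by omega
  rw [hde] at hcard ⊢
  nlinarith [hcard, he1]
end

section
/- If U₁, ..., U_m are unitary matrices in U(d) such that every entry of U_r* U_t has absolute value 1/√d for all r ≠ t, then m ≤ d + 1. -/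
open Matrix Complex Finset

section MubAux

variable {d : ℕ}

/-- trace of product of two rank-one "projectors". -/
lemma mub_trace_vecMulVec_mul (u w : Fin d → ℂ) :
    Matrix.trace (Matrix.vecMulVec u (star u) * Matrix.vecMulVec w (star w)) =
      (star u ⬝ᵥ w) * (star w ⬝ᵥ u) := by
  classical
  have : Matrix.trace (Matrix.vecMulVec u (star u) * Matrix.vecMulVec w (star w)) =
      ∑ a : Fin d, ∑ b : Fin d, u a * star (u b) * (w b * star (w a)) := by
    simp [Matrix.trace, Matrix.diag, Matrix.mul_apply, Matrix.vecMulVec_apply]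
  rw [this, dotProduct, dotProduct, Finset.sum_mul_sum, Finset.sum_comm]
  refine Finset.sum_congr rfl fun a _ => Finset.sum_congr rfl fun b _ => ?_
  simp [Pi.star_apply]
  ring

lemma mub_trace_vecMulVec (u : Fin d → ℂ) :
    Matrix.trace (Matrix.vecMulVec u (star u)) = star u ⬝ᵥ u := by
  classical
  simp [Matrix.trace, Matrix.diag, Matrix.vecMulVec_apply, dotProduct, mul_comm]

end MubAux

/-- If `U₁,…,U_m` are unitary matrices in `U(d)` (`d ≥ 2`) such that every entry of
`U_r* U_t` has absolute value `1/√d` for all `r ≠ t`, then `m ≤ d + 1`. -/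
theorem mub_matrix_card_le (d : ℕ) (hd : 2 ≤ d) (m : ℕ)
    (U : Fin m → Matrix.unitaryGroup (Fin d) ℂ)
    (hmub : ∀ r t, r ≠ t → ∀ i j,
      ‖(star ((U r : Matrix (Fin d) (Fin d) ℂ)) *
        (U t : Matrix (Fin d) (Fin d) ℂ)) i j‖ = 1 / Real.sqrt d) :
    m ≤ d + 1 := by
  classical
  have hd0 : (d : ℂ) ≠ 0 := by
    exact_mod_cast Nat.cast_ne_zero.mpr (by omega)
  -- columns of the unitaries
  set v : Fin m → Fin d → Fin d → ℂ :=
    fun r i a => (U r : Matrix (Fin d) (Fin d) ℂ) a i with hv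
  -- rank one projectors
  set P : Fin m → Fin d → Matrix (Fin d) (Fin d) ℂ :=
    fun r i => Matrix.vecMulVec (v r i) (star (v r i)) with hP
  have hinner : ∀ r i t j, star (v r i) ⬝ᵥ v t j =
      (star ((U r : Matrix (Fin d) (Fin d) ℂ)) * (U t : Matrix (Fin d) (Fin d) ℂ)) i j := by
    intro r i t j
    simp [dotProduct, Matrix.mul_apply, Matrix.star_apply, hv]
  have hsame : ∀ r i j, star (v r i) ⬝ᵥ v r j = if i = j then 1 else 0 := by
    intro r i j
    rw [hinner]
    have h1 : star ((U r : Matrix (Fin d) (Fin d) ℂ)) * (U r : Matrix (Fin d) (Fin d) ℂ) = 1 :=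
      (U r).2.1
    rw [h1, Matrix.one_apply]
  have htrP : ∀ r i, Matrix.trace (P r i) = 1 := by
    intro r i
    rw [hP]
    simp only
    rw [mub_trace_vecMulVec, hsame, if_pos rfl]
  have htrPP_same : ∀ r i j, Matrix.trace (P r i * P r j) = if i = j then 1 else 0 := by
    intro r i j
    rw [hP]; simp only
    rw [mub_trace_vecMulVec_mul, hsame, hsame]
    by_cases h : i = j <;> simp [h]
  have htrPP_diff : ∀ r t, r ≠ t → ∀ i j,
      Matrix.trace (P r i * P t j) = (d : ℂ)⁻¹ := by
    intro r t hrt i j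
    rw [hP]; simp only
    rw [mub_trace_vecMulVec_mul]
    have hsw : star (v t j) ⬝ᵥ v r i = star (star (v r i) ⬝ᵥ v t j) := by
      rw [star_dotProduct]
    rw [hsw, Complex.star_def, Complex.mul_conj]
    rw [← Complex.sq_norm, hinner, hmub r t hrt]
    rw [div_pow, one_pow, Real.sq_sqrt (by positivity)]
    push_cast
    rw [one_div]
  -- traceless versions
  set Q : Fin m → Fin d → Matrix (Fin d) (Fin d) ℂ :=
    fun r i => P r i - (d : ℂ)⁻¹ • 1 with hQ
  have htrQ : ∀ r i, Matrix.trace (Q r i) = 0 := by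
    intro r i
    rw [hQ]; simp only
    rw [Matrix.trace_sub, htrP, Matrix.trace_smul, Matrix.trace_one]
    simp [Fintype.card_fin]
    field_simp
    ring
  have htrQQ : ∀ r i t j, Matrix.trace (Q r i * Q t j) =
      (if r = t then (if i = j then 1 else 0) else (d : ℂ)⁻¹) - (d : ℂ)⁻¹ := by
    intro r i t j
    have expand : Q r i * Q t j = P r i * P t j - (d : ℂ)⁻¹ • P r i - (d : ℂ)⁻¹ • P t j
        + ((d : ℂ)⁻¹ * (d : ℂ)⁻¹) • 1 := by
      rw [hQ]; simp only
      rw [sub_mul, mul_sub, mul_sub]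
      simp [Matrix.smul_mul, Matrix.mul_smul, smul_smul]
      abel
    rw [expand]
    rw [Matrix.trace_add, Matrix.trace_sub, Matrix.trace_sub, Matrix.trace_smul,
      Matrix.trace_smul, Matrix.trace_smul, Matrix.trace_one, htrP, htrP]
    have hPP : Matrix.trace (P r i * P t j) =
        if r = t then (if i = j then 1 else 0) else (d : ℂ)⁻¹ := by
      by_cases h : r = t
      · subst h; rw [htrPP_same, if_pos rfl]
      · rw [htrPP_diff r t h, if_neg h]
    rw [hPP]
    have : ((d : ℂ)⁻¹ * (d : ℂ)⁻¹) • (Fintype.card (Fin d) : ℂ) = (d : ℂ)⁻¹ := by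
      simp [Fintype.card_fin, smul_eq_mul]
      field_simp
    rw [Fintype.card_fin] at this ⊢
    simp only [smul_eq_mul] at *
    field_simp
    ring
  -- the family of traceless matrices
  set e : Fin (d - 1) → Fin d := Fin.castLE (Nat.sub_le d 1) with he
  set F : Fin m × Fin (d - 1) → Matrix (Fin d) (Fin d) ℂ :=
    fun p => Q p.1 (e p.2) with hF
  have hindep : LinearIndependent ℂ F := by
    rw [Fintype.linearIndependent_iff]
    intro c hc
    -- pair the relation with each Q s (e j)
    have key : ∀ (s : Fin m) (j : Fin (d - 1)),
        c (s, j) = (d : ℂ)⁻¹ * ∑ i : Fin (d - 1), c (s, i) := by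
      intro s j
      have h0 := congrArg (fun A => Matrix.trace (Q s (e j) * A)) hc
      simp only [Matrix.mul_zero, Matrix.trace_zero] at h0
      rw [Matrix.mul_sum, Matrix.trace_sum] at h0
      have h1 : ∀ p : Fin m × Fin (d - 1),
          Matrix.trace (Q s (e j) * (c p • F p)) =
            c p * ((if s = p.1 then (if e j = e p.2 then 1 else 0) else (d : ℂ)⁻¹)
              - (d : ℂ)⁻¹) := by
        intro p
        rw [Matrix.mul_smul, Matrix.trace_smul, smul_eq_mul, hF]
        simp only
        rw [htrQQ]
      rw [Finset.sum_congr rfl (fun p _ => h1 p)] at h0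
      rw [Fintype.sum_prod_type] at h0
      rw [Finset.sum_eq_single s] at h0
      · have h2 : ∀ i : Fin (d - 1), (if e j = e i then (1:ℂ) else 0) =
            if j = i then 1 else 0 := by
          intro i
          simp [he, Fin.castLE_inj]
        simp only [eq_self_iff_true, if_true, h2] at h0
        have h3 : ∑ i : Fin (d - 1), c (s, i) *
            ((if j = i then (1:ℂ) else 0) - (d : ℂ)⁻¹)
            = c (s, j) - (d : ℂ)⁻¹ * ∑ i : Fin (d - 1), c (s, i) := by
          simp only [mul_sub, mul_ite, mul_one, mul_zero]
          rw [Finset.sum_sub_distrib, Finset.mul_sum]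
          congr 1
          · simp
          · exact Finset.sum_congr rfl fun i _ => mul_comm _ _
        rw [h3] at h0
        have := sub_eq_zero.mp h0
        exact this
      · intro b _ hb
        apply Finset.sum_eq_zero
        intro i _
        rw [if_neg (Ne.symm hb)]
        simp
      · intro hs
        exact absurd (Finset.mem_univ s) hs
    -- conclude all coefficients vanish
    intro p
    obtain ⟨s, j⟩ := p
    have hS : ∑ i : Fin (d - 1), c (s, i) = 0 := by
      set S := ∑ i : Fin (d - 1), c (s, i) with hSdef
      have h4 : S = (Fintype.card (Fin (d - 1)) : ℂ) * ((d : ℂ)⁻¹ * S) := by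
        conv_lhs => rw [hSdef, Finset.sum_congr rfl (fun i _ => key s i)]
        rw [Finset.sum_const, Finset.card_univ, nsmul_eq_mul]
      rw [Fintype.card_fin] at h4
      have hcast : ((d - 1 : ℕ) : ℂ) = (d : ℂ) - 1 := by
        push_cast [Nat.cast_sub (by omega : 1 ≤ d)]
        ring
      rw [hcast] at h4
      have h5 : (d : ℂ) * S = ((d : ℂ) - 1) * S := by
        conv_lhs => rw [h4]
        field_simp
      linear_combination h5
    rw [key s j, hS, mul_zero]
  -- restrict to the kernel of the trace functional
  set T : Matrix (Fin d) (Fin d) ℂ →ₗ[ℂ] ℂ := Matrix.traceLinearMap (Fin d) ℂ ℂ with hT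
  have hFk : ∀ p, F p ∈ LinearMap.ker T := by
    intro p
    rw [LinearMap.mem_ker]
    show Matrix.trace (F p) = 0
    rw [hF]
    exact htrQ _ _
  set F' : Fin m × Fin (d - 1) → LinearMap.ker T := fun p => ⟨F p, hFk p⟩ with hF'
  have hindep' : LinearIndependent ℂ F' := by
    apply LinearIndependent.of_comp (LinearMap.ker T).subtype
    exact hindep
  have hcard := hindep'.fintype_card_le_finrank
  rw [Fintype.card_prod, Fintype.card_fin, Fintype.card_fin] at hcard
  have hTne : T ≠ 0 := by
    intro h
    have h1 : T (1 : Matrix (Fin d) (Fin d) ℂ) = 0 := by rw [h]; rfl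
    have h2 : T (1 : Matrix (Fin d) (Fin d) ℂ) = (d : ℂ) := by
      show Matrix.trace (1 : Matrix (Fin d) (Fin d) ℂ) = (d : ℂ)
      rw [Matrix.trace_one]
      simp
    rw [h2] at h1
    exact hd0 h1
  have hker := Module.Dual.finrank_ker_add_one_of_ne_zero hTne
  have hfull : Module.finrank ℂ (Matrix (Fin d) (Fin d) ℂ) = d * d := by
    rw [Module.finrank_matrix]
    simp
  rw [hfull] at hker
  have hbound : m * (d - 1) + 1 ≤ d * d := by
    omega
  obtain ⟨k, rfl⟩ : ∃ k, d = k + 2 := ⟨d - 2, by omega⟩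
  have hb2 : m * (k + 1) ≤ (k + 3) * (k + 1) := by
    have h' : m * (k + 1) + 1 ≤ (k + 2) * (k + 2) := by
      have he1 : k + 2 - 1 = k + 1 := rfl
      rw [he1] at hbound
      exact hbound
    nlinarith [h']
  have := Nat.le_of_mul_le_mul_right hb2 (by omega : 0 < k + 1)
  omega
end

section
/- Suppose h : U(6) → ℝ is a continuous positive definite function vanishing on scaled complex Hadamard matrices with h(I) = 5 and ∫ h dμ = 5/7, and suppose m : U(6) → ℝ is continuous, nonnegative, vanishes on scaled complex Hadamard matrices and at the identity, with ∫ m dμ > 0. If for some ε > 0 the function h + ε·m is positive definite, then the number of mutually unbiased bases in ℂ^6 is strictly less than 7. -/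
open MeasureTheory
open scoped ComplexOrder

/-- `Z` is a scaled complex Hadamard matrix: all entries have modulus `1/√6`
(`Z` being unitary, it is then `(1/√6) H` with `H` complex Hadamard). -/
def IsScaledHadamard (Z : Matrix.unitaryGroup (Fin 6) ℂ) : Prop :=
  ∀ i j, ‖(Z : Matrix (Fin 6) (Fin 6) ℂ) i j‖ = 1 / Real.sqrt 6

lemma IsPosDefReal.sum_translate_le {G : Type*} [Group G] {f : G → ℝ}
    (hpd : IsPosDefReal f) {n : ℕ} (U : Fin n → G) (x : G) :
    (∑ i, ∑ j, f ((U i)⁻¹ * (x * U j))) ≤ ∑ i, ∑ j, f ((U i)⁻¹ * U j) := by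
  classical
  set v : Fin (n + n) → G := Fin.append U (fun i => x * U i) with hv
  set S1 : ℝ := ∑ i, ∑ j, f ((U i)⁻¹ * U j) with hS1
  set Sx : ℝ := ∑ i, ∑ j, f ((U i)⁻¹ * (x * U j)) with hSx
  set Sy : ℝ := ∑ i, ∑ j, f ((U i)⁻¹ * (x⁻¹ * U j)) with hSy
  have expand : ∀ a b : ℂ,
      (∑ i, ∑ j, (starRingEnd ℂ) (Fin.append (fun _ => a) (fun _ => b) i) *
        Fin.append (fun _ => a) (fun _ => b) j * (f ((v i)⁻¹ * v j) : ℂ)) =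
      (starRingEnd ℂ) a * a * (S1 : ℂ) + (starRingEnd ℂ) a * b * (Sx : ℂ)
        + (starRingEnd ℂ) b * a * (Sy : ℂ) + (starRingEnd ℂ) b * b * (S1 : ℂ) := by
    intro a b
    simp only [hv, Fin.sum_univ_add, Fin.append_left, Fin.append_right, mul_inv_rev,
      mul_assoc, inv_mul_cancel_left]
    simp only [Finset.sum_add_distrib, ← Finset.mul_sum]
    push_cast [hS1, hSx, hSy]
    ring
  have h1 := hpd (n + n) v (Fin.append (fun _ => (1 : ℂ)) (fun _ => (-1 : ℂ)))
  have h2 := hpd (n + n) v (Fin.append (fun _ => (1 : ℂ)) (fun _ => Complex.I))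
  rw [expand 1 (-1)] at h1
  rw [expand 1 Complex.I] at h2
  have hz1 : (starRingEnd ℂ) 1 * 1 * (S1 : ℂ) + (starRingEnd ℂ) 1 * (-1) * (Sx : ℂ)
      + (starRingEnd ℂ) (-1) * 1 * (Sy : ℂ) + (starRingEnd ℂ) (-1) * (-1) * (S1 : ℂ)
      = ((2 * S1 - Sx - Sy : ℝ) : ℂ) := by
    simp only [map_one, map_neg]
    push_cast
    ring
  have hz2 : (starRingEnd ℂ) 1 * 1 * (S1 : ℂ) + (starRingEnd ℂ) 1 * Complex.I * (Sx : ℂ)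
      + (starRingEnd ℂ) Complex.I * 1 * (Sy : ℂ)
      + (starRingEnd ℂ) Complex.I * Complex.I * (S1 : ℂ)
      = ((2 * S1 : ℝ) : ℂ) + ((Sx - Sy : ℝ) : ℂ) * Complex.I := by
    simp only [map_one, Complex.conj_I]
    push_cast
    linear_combination (-(S1 : ℂ)) * Complex.I_mul_I
  rw [hz1] at h1
  rw [hz2] at h2
  have hre : (0 : ℝ) ≤ 2 * S1 - Sx - Sy := by exact_mod_cast h1
  have him := (Complex.le_def.mp h2).2
  simp [Complex.add_im, Complex.mul_im] at him
  linarith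

/-- Suppose `h : U(6) → ℝ` is continuous positive definite, vanishes on scaled
complex Hadamard matrices, `h(I) = 5`, `∫ h dμ = 5/7`; and `m : U(6) → ℝ` is
continuous, nonnegative, vanishes on scaled complex Hadamard matrices and at the
identity, with `∫ m dμ > 0`.  If for some `ε > 0` the function `h + ε m` is
positive definite, then the number of mutually unbiased bases in `ℂ^6` is
strictly less than `7`. -/
theorem no_seven_mubs_of_witness
    [IsTopologicalGroup (Matrix.unitaryGroup (Fin 6) ℂ)]
    [CompactSpace (Matrix.unitaryGroup (Fin 6) ℂ)]
    [MeasurableSpace (Matrix.unitaryGroup (Fin 6) ℂ)]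
    [BorelSpace (Matrix.unitaryGroup (Fin 6) ℂ)]
    (μ : Measure (Matrix.unitaryGroup (Fin 6) ℂ)) [μ.IsHaarMeasure]
    [IsProbabilityMeasure μ]
    (h : Matrix.unitaryGroup (Fin 6) ℂ → ℝ)
    (hcont : Continuous h) (hpd : IsPosDefReal h)
    (hvan : ∀ Z, IsScaledHadamard Z → h Z = 0)
    (hI : h 1 = 5) (hint : ∫ Z, h Z ∂μ = 5 / 7)
    (m : Matrix.unitaryGroup (Fin 6) ℂ → ℝ)
    (mcont : Continuous m) (mnonneg : ∀ Z, 0 ≤ m Z)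
    (mvan : ∀ Z, IsScaledHadamard Z → m Z = 0) (mI : m 1 = 0)
    (mint : 0 < ∫ Z, m Z ∂μ)
    (ε : ℝ) (hε : 0 < ε) (hpd' : IsPosDefReal (fun Z => h Z + ε * m Z)) :
    ∀ (n : ℕ) (U : Fin n → Matrix.unitaryGroup (Fin 6) ℂ),
      (∀ r t, r ≠ t → IsScaledHadamard ((U r)⁻¹ * U t)) → n < 7 := by
  intro n U hMUB
  by_contra hn
  push_neg at hn
  have hn' : (7 : ℝ) ≤ (n : ℝ) := by exact_mod_cast hn
  set f : Matrix.unitaryGroup (Fin 6) ℂ → ℝ := fun Z => h Z + ε * m Z with hf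
  have fcont : Continuous f := by rw [hf]; exact hcont.add (continuous_const.mul mcont)
  have fI : f 1 = 5 := by simp [hf, hI, mI]
  have fvan : ∀ Z, IsScaledHadamard Z → f Z = 0 := fun Z hZ => by
    simp [hf, hvan Z hZ, mvan Z hZ]
  -- integrability of continuous functions
  have integ : ∀ g : Matrix.unitaryGroup (Fin 6) ℂ → ℝ, Continuous g → Integrable g μ := fun g hg =>
    hg.integrable_of_hasCompactSupport (HasCompactSupport.of_compactSpace g)
  -- right invariance of Haar measure on a compact group
  haveI : μ.IsMulRightInvariant := by
    constructor
    intro g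
    haveI : IsProbabilityMeasure (Measure.map (· * g) μ) :=
      Measure.isProbabilityMeasure_map (measurable_mul_const g).aemeasurable
    exact Measure.isHaarMeasure_eq_of_isProbabilityMeasure _ μ
  -- the diagonal sum
  have hS1 : (∑ i, ∑ j, f ((U i)⁻¹ * U j)) = 5 * n := by
    have hrow : ∀ i : Fin n, (∑ j, f ((U i)⁻¹ * U j)) = 5 := by
      intro i
      rw [Finset.sum_eq_single i]
      · simpa using fI
      · intro j _ hj
        exact fvan _ (hMUB i j fun e => hj e.symm)
      · simp
    simp [hrow, mul_comm]
  -- pointwise bound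
  have key : ∀ x : Matrix.unitaryGroup (Fin 6) ℂ, (∑ i, ∑ j, f ((U i)⁻¹ * (x * U j))) ≤ 5 * n := by
    intro x
    rw [← hS1]
    simp only [hf]
    exact hpd'.sum_translate_le U x
  -- integral computation
  have hcell : ∀ i j : Fin n, ∫ x, f ((U i)⁻¹ * (x * U j)) ∂μ = ∫ z, f z ∂μ := by
    intro i j
    calc ∫ x, f ((U i)⁻¹ * (x * U j)) ∂μ
        = ∫ y, f ((U i)⁻¹ * y) ∂μ :=
          integral_mul_right_eq_self (fun y => f ((U i)⁻¹ * y)) (U j)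
      _ = ∫ z, f z ∂μ := integral_mul_left_eq_self f (U i)⁻¹
  have Fcont : ∀ i j : Fin n, Continuous fun x : Matrix.unitaryGroup (Fin 6) ℂ => f ((U i)⁻¹ * (x * U j)) := by
    intro i j
    exact fcont.comp (continuous_const.mul (continuous_id.mul continuous_const))
  have hFint : ∫ x, (∑ i, ∑ j, f ((U i)⁻¹ * (x * U j))) ∂μ
      = (n : ℝ) ^ 2 * ∫ z, f z ∂μ := by
    rw [integral_finset_sum _ (fun i _ => by
      exact integ _ (by exact continuous_finset_sum _ fun j _ => Fcont i j))]
    have : ∀ i : Fin n, ∫ x, (∑ j, f ((U i)⁻¹ * (x * U j))) ∂μ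
        = (n : ℝ) * ∫ z, f z ∂μ := by
      intro i
      rw [integral_finset_sum _ (fun j _ => integ _ (Fcont i j))]
      simp [hcell]
    simp [this, Finset.sum_const]
    ring
  -- integrate the pointwise bound
  have hmono : ∫ x, (∑ i, ∑ j, f ((U i)⁻¹ * (x * U j))) ∂μ ≤ 5 * n := by
    calc ∫ x, (∑ i, ∑ j, f ((U i)⁻¹ * (x * U j))) ∂μ
        ≤ ∫ _x, (5 * (n : ℝ)) ∂μ := by
          refine integral_mono ?_ (integrable_const _) key
          exact integ _ (continuous_finset_sum _ fun i _ =>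
            continuous_finset_sum _ fun j _ => Fcont i j)
      _ = 5 * n := by simp
  -- the value of ∫ f
  have hintf : ∫ z, f z ∂μ = 5 / 7 + ε * ∫ z, m z ∂μ := by
    rw [hf]
    rw [integral_add (integ h hcont) ((integ m mcont).const_mul ε)]
    rw [integral_const_mul, hint]
  rw [hFint, hintf] at hmono
  have hI0 : 0 < ε * ∫ z, m z ∂μ := mul_pos hε mint
  have hx1 : 5 * (n : ℝ) ≤ (n : ℝ) ^ 2 * (5 / 7) := by nlinarith
  have hx2 : 0 < (n : ℝ) ^ 2 * (ε * ∫ z, m z ∂μ) := by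
    apply mul_pos _ hI0
    positivity
  have hx3 : (n : ℝ) ^ 2 * (5 / 7 + ε * ∫ z, m z ∂μ)
      = (n : ℝ) ^ 2 * (5 / 7) + (n : ℝ) ^ 2 * (ε * ∫ z, m z ∂μ) := by ring
  linarith
end
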